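/- arXiv:2510.12398 — 7 statements merged into one kernel-verified Lean document; each statement's English description precedes it below -/
import Mathlib

section
/- Let (X, d) be a complete separable metric space and let (μ_i)_{i∈ℕ} be Borel probability measures on X converging weakly to a Borel probability measure μ on X. If there is a constant C < ∞ with Var(μ_i, μ_i) ≤ C for every i, then for every p ∈ [1, 2) one has W_p(μ_i, μ)^p → 0 as i → ∞; that is, the infimum over all couplings π of (μ_i, μ) of ∫_{X×X} d(x, y)^p dπ(x, y) tends to 0. -/
open MeasureTheory Filter
open scoped Topology
open scoped ENNReal

/-- The variance between two Borel measures on a metric space: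
`Var(μ, ν) = ∫∫ d(x,y)² dμ(x) dν(y)`, valued in `[0, ∞]`. -/
noncomputable def var2 {X : Type*} [PseudoEMetricSpace X] [MeasurableSpace X]
    (μ ν : Measure X) : ℝ≥0∞ :=
  ∫⁻ x, ∫⁻ y, edist x y ^ 2 ∂ν ∂μ

/-- `π` is a coupling of `μ` and `ν` if its two marginals are `μ` and `ν`. -/
def IsCoupling {X : Type*} [MeasurableSpace X] (π : Measure (X × X)) (μ ν : Measure X) : Prop :=
  π.map Prod.fst = μ ∧ π.map Prod.snd = ν

/-- The `p`-th power of the `W_p`-Wasserstein distance: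
the infimum over all couplings `π` of `(μ, ν)` of `∫ d(x,y)^p dπ(x,y)`. -/
noncomputable def wassersteinPow {X : Type*} [PseudoEMetricSpace X] [MeasurableSpace X]
    (p : ℝ) (μ ν : Measure X) : ℝ≥0∞ :=
  ⨅ π : {π : Measure (X × X) // IsCoupling π μ ν}, ∫⁻ q, edist q.1 q.2 ^ p ∂(π : Measure (X × X))

namespace WassAux

open Set

lemma inv_mul_le_one' (a : ℝ≥0∞) : a⁻¹ * a ≤ 1 := by
  rcases eq_or_ne a 0 with rfl | h0
  · simp
  rcases eq_or_ne a ⊤ with rfl | ht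
  · simp
  · rw [ENNReal.inv_mul_cancel h0 ht]

lemma mul_inv_le_one' (a : ℝ≥0∞) : a * a⁻¹ ≤ 1 := by
  rw [mul_comm]; exact inv_mul_le_one' a

/-- pointwise bound `a^p ≤ R^p + R^(p-2) * a^2`. -/
lemma rpow_le_aux {R a : ℝ≥0∞} {p : ℝ} (hR0 : R ≠ 0) (hp : 0 ≤ p) (hp2 : p ≤ 2)
    (ha : a ≠ ∞) : a ^ p ≤ R ^ p + R ^ (p - 2) * a ^ (2 : ℕ) := by
  rcases le_total a R with h | h
  · exact le_add_right (ENNReal.rpow_le_rpow h hp)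
  · have ha0 : a ≠ 0 := fun h' => hR0 (le_antisymm (h' ▸ h) zero_le)
    have key : a ^ p = a ^ (p - 2) * a ^ (2 : ℕ) := by
      rw [← ENNReal.rpow_natCast a 2, ← ENNReal.rpow_add _ _ ha0 ha]
      norm_num
    rw [key]
    refine le_add_left (mul_le_mul_left ?_ _)
    have h2 : a ^ (p - 2) = (a ^ (2 - p))⁻¹ := by
      rw [← ENNReal.rpow_neg]; ring_nf
    have h3 : R ^ (p - 2) = (R ^ (2 - p))⁻¹ := by
      rw [← ENNReal.rpow_neg]; ring_nf
    rw [h2, h3]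
    exact ENNReal.inv_le_inv.2 (ENNReal.rpow_le_rpow h (by linarith))

/-- squared triangle inequality with constant 4 -/
lemma edist_sq_le {X : Type*} [PseudoEMetricSpace X] (x y z : X) :
    edist x y ^ (2 : ℕ) ≤ 4 * (edist x z ^ (2 : ℕ) + edist z y ^ (2 : ℕ)) := by
  have h1 : edist x y ≤ edist x z + edist z y := edist_triangle x z y
  have h2 : edist x z + edist z y ≤ 2 * max (edist x z) (edist z y) := by
    rw [two_mul]
    exact add_le_add (le_max_left _ _) (le_max_right _ _)
  calc edist x y ^ (2:ℕ) ≤ (2 * max (edist x z) (edist z y)) ^ (2:ℕ) := by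
        exact pow_le_pow_left' (h1.trans h2) 2
    _ = 4 * (max (edist x z) (edist z y)) ^ (2:ℕ) := by ring
    _ ≤ 4 * (edist x z ^ (2:ℕ) + edist z y ^ (2:ℕ)) := by
        gcongr
        rcases max_cases (edist x z) (edist z y) with ⟨h, _⟩ | ⟨h, _⟩ <;> rw [h]
        · exact le_add_right le_rfl
        · exact le_add_left le_rfl

/-- partition decomposition of a measure -/
lemma sum_restrict_eq {X : Type*} [MeasurableSpace X] (μ : Measure X) (c : ℕ → Set X) (K : ℕ)
    (hmeas : ∀ k, MeasurableSet (c k))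
    (hdisj : Set.PairwiseDisjoint ↑(Finset.range (K+1)) c)
    (hcover : (⋃ k ∈ Finset.range (K+1), c k) = Set.univ) :
    ∑ k ∈ Finset.range (K+1), μ.restrict (c k) = μ := by
  ext s hs
  rw [Measure.finset_sum_apply]
  simp_rw [Measure.restrict_apply hs]
  rw [← measure_biUnion_finset (hdisj.mono_on (fun k _ => inter_subset_right))
      (fun k _ => hs.inter (hmeas k))]
  congr 1
  rw [← Set.inter_iUnion₂, hcover, Set.inter_univ]

lemma map_finset_sum {X Y : Type*} [MeasurableSpace X] [MeasurableSpace Y]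
    {f : X → Y} (hf : Measurable f) (s : Finset ℕ) (μ : ℕ → Measure X) :
    (∑ k ∈ s, μ k).map f = ∑ k ∈ s, (μ k).map f := by
  classical
  induction s using Finset.induction with
  | empty => simp
  | insert _ _ h ih =>
      rw [Finset.sum_insert h, Finset.sum_insert h, Measure.map_add _ _ hf, ih]

section
variable {X : Type*} [MetricSpace X] [SecondCountableTopology X]
  [MeasurableSpace X] [BorelSpace X]

lemma meas_edist_sq : Measurable (fun q : X × X => edist q.1 q.2 ^ (2:ℕ)) :=
  (continuous_edist.measurable).pow_const 2

lemma meas_edist_rpow (p : ℝ) : Measurable (fun q : X × X => edist q.1 q.2 ^ p) :=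
  (continuous_edist.measurable).pow_const p

/-- second moment of a product measure via marginal second moments -/
lemma prod_moment (P Q : Measure X) [IsFiniteMeasure P] [IsFiniteMeasure Q] (x₀ : X) :
    ∫⁻ q : X × X, edist q.1 q.2 ^ (2:ℕ) ∂(P.prod Q) ≤
      4 * (Q Set.univ * ∫⁻ x, edist x x₀ ^ (2:ℕ) ∂P
         + P Set.univ * ∫⁻ y, edist y x₀ ^ (2:ℕ) ∂Q) := by
  have h1 : ∫⁻ q : X × X, edist q.1 q.2 ^ (2:ℕ) ∂(P.prod Q) ≤
      ∫⁻ q : X × X, 4 * (edist q.1 x₀ ^ (2:ℕ) + edist x₀ q.2 ^ (2:ℕ)) ∂(P.prod Q) :=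
    lintegral_mono fun q => edist_sq_le q.1 q.2 x₀
  refine h1.trans ?_
  have hm1 : Measurable fun q : X × X => edist q.1 x₀ ^ (2:ℕ) :=
    ((continuous_fst.edist continuous_const).measurable).pow_const 2
  have hm2 : Measurable fun q : X × X => edist x₀ q.2 ^ (2:ℕ) :=
    ((continuous_const.edist continuous_snd).measurable).pow_const 2
  rw [lintegral_const_mul (f := fun q : X × X => edist q.1 x₀ ^ (2:ℕ) + edist x₀ q.2 ^ (2:ℕ)) _ (hm1.add hm2), lintegral_add_left hm1]
  rw [lintegral_prod _ hm1.aemeasurable, lintegral_prod _ hm2.aemeasurable]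
  simp only [lintegral_const]
  have hmx : Measurable fun x : X => edist x x₀ ^ (2:ℕ) := by fun_prop
  rw [lintegral_mul_const _ hmx]
  have h2' : ∫⁻ y : X, edist x₀ y ^ (2:ℕ) ∂Q = ∫⁻ y : X, edist y x₀ ^ (2:ℕ) ∂Q :=
    lintegral_congr fun y => by rw [edist_comm]
  rw [h2']
  exact le_of_eq (by ring)

theorem exists_coupling
    (μ ν : Measure X) [IsProbabilityMeasure μ] [IsProbabilityMeasure ν]
    (c : ℕ → Set X) (K : ℕ)
    (hmeas : ∀ k, MeasurableSet (c k))
    (hdisj : Set.PairwiseDisjoint ↑(Finset.range (K+1)) c)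
    (hcover : (⋃ k ∈ Finset.range (K+1), c k) = Set.univ)
    (x₀ : X) (M : ℝ≥0∞)
    (hμM : ∫⁻ x, edist x x₀ ^ (2:ℕ) ∂μ ≤ M)
    (hνM : ∫⁻ x, edist x x₀ ^ (2:ℕ) ∂ν ≤ M)
    (p : ℝ) (hp1 : 0 ≤ p) (hp2 : p ≤ 2)
    (R : ℝ≥0∞) (hR0 : R ≠ 0)
    (ε : ℝ≥0∞)
    (hsmall : ∀ k < K, ∀ x ∈ c k, ∀ y ∈ c k, edist x y ≤ ε) :
    ∃ π : Measure (X × X), IsCoupling π μ ν ∧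
      ∫⁻ q : X × X, edist q.1 q.2 ^ p ∂π ≤
        ε ^ p + R ^ p * min (μ (c K)) (ν (c K))
          + R ^ p * (1 - ∑ k ∈ Finset.range (K+1), min (μ (c k)) (ν (c k)))
          + 16 * M * R ^ (p - 2) := by
  classical
  set m : ℕ → ℝ≥0∞ := fun k => min (μ (c k)) (ν (c k)) with hm
  set t : ℕ → ℝ≥0∞ := fun k => m k * (μ (c k))⁻¹ * (ν (c k))⁻¹ with ht
  set a : ℕ → ℝ≥0∞ := fun k => m k * (μ (c k))⁻¹ with ha
  set b : ℕ → ℝ≥0∞ := fun k => m k * (ν (c k))⁻¹ with hb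
  set δ : ℝ≥0∞ := 1 - ∑ k ∈ Finset.range (K+1), m k with hδ
  set P : ℕ → Measure X := fun k => μ.restrict (c k) with hP
  set Q : ℕ → Measure X := fun k => ν.restrict (c k) with hQ
  set μ' : Measure X := ∑ k ∈ Finset.range (K+1), (1 - a k) • P k with hμ'
  set ν' : Measure X := ∑ k ∈ Finset.range (K+1), (1 - b k) • Q k with hν'
  have hμc_ne : ∀ k, μ (c k) ≠ ∞ := fun k => measure_ne_top _ _
  have hνc_ne : ∀ k, ν (c k) ≠ ∞ := fun k => measure_ne_top _ _
  have hmμ : ∀ k, m k ≤ μ (c k) := fun k => min_le_left _ _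
  have hmν : ∀ k, m k ≤ ν (c k) := fun k => min_le_right _ _
  -- coefficient computations
  have hak : ∀ k, t k * ν (c k) = a k := by
    intro k
    rcases eq_or_ne (ν (c k)) 0 with h0 | h0
    · have hm0 : m k = 0 := le_antisymm (h0 ▸ hmν k) zero_le
      simp [ht, ha, hm0]
    · have : t k * ν (c k) = m k * (μ (c k))⁻¹ * ((ν (c k))⁻¹ * ν (c k)) := by
        rw [ht]; ring
      rw [this, ENNReal.inv_mul_cancel h0 (hνc_ne k), mul_one, ha]
  have hbk : ∀ k, t k * μ (c k) = b k := by
    intro k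
    rcases eq_or_ne (μ (c k)) 0 with h0 | h0
    · have hm0 : m k = 0 := le_antisymm (h0 ▸ hmμ k) zero_le
      simp [ht, hb, hm0]
    · have : t k * μ (c k) = m k * (ν (c k))⁻¹ * ((μ (c k))⁻¹ * μ (c k)) := by
        rw [ht]; ring
      rw [this, ENNReal.inv_mul_cancel h0 (hμc_ne k), mul_one, hb]
  have hak_le : ∀ k, a k ≤ 1 := fun k =>
    (mul_le_mul_left (hmμ k) _).trans (mul_inv_le_one' _)
  have hbk_le : ∀ k, b k ≤ 1 := fun k =>
    (mul_le_mul_left (hmν k) _).trans (mul_inv_le_one' _)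
  have htμν : ∀ k, t k * (μ (c k) * ν (c k)) ≤ m k := by
    intro k
    calc t k * (μ (c k) * ν (c k))
        = m k * ((μ (c k))⁻¹ * μ (c k)) * ((ν (c k))⁻¹ * ν (c k)) := by rw [ht]; ring
      _ ≤ m k * 1 * 1 := by
          gcongr
          · exact inv_mul_le_one' _
          · exact inv_mul_le_one' _
      _ = m k := by ring
  -- sums of cell measures
  have hνsum : ∑ k ∈ Finset.range (K+1), ν (c k) = 1 := by
    rw [← measure_biUnion_finset hdisj (fun k _ => hmeas k), hcover, measure_univ]
  have hμsum : ∑ k ∈ Finset.range (K+1), μ (c k) = 1 := by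
    rw [← measure_biUnion_finset hdisj (fun k _ => hmeas k), hcover, measure_univ]
  -- total masses of leftover measures
  have hbQ : ∀ k, (1 - b k) * ν (c k) = ν (c k) - m k := by
    intro k
    rw [ENNReal.sub_mul (fun _ _ => hνc_ne k), one_mul]
    congr 1
    rcases eq_or_ne (ν (c k)) 0 with h0 | h0
    · have hm0 : m k = 0 := le_antisymm (h0 ▸ hmν k) zero_le
      simp [hb, hm0, h0]
    · rw [hb]
      rw [mul_assoc, ENNReal.inv_mul_cancel h0 (hνc_ne k), mul_one]
  have haP : ∀ k, (1 - a k) * μ (c k) = μ (c k) - m k := by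
    intro k
    rw [ENNReal.sub_mul (fun _ _ => hμc_ne k), one_mul]
    congr 1
    rcases eq_or_ne (μ (c k)) 0 with h0 | h0
    · have hm0 : m k = 0 := le_antisymm (h0 ▸ hmμ k) zero_le
      simp [ha, hm0, h0]
    · rw [ha]
      rw [mul_assoc, ENNReal.inv_mul_cancel h0 (hμc_ne k), mul_one]
  have hmsum_ne : ∑ k ∈ Finset.range (K+1), m k ≠ ∞ := by
    refine (lt_of_le_of_lt ?_ ENNReal.one_lt_top).ne
    rw [← hνsum]
    exact Finset.sum_le_sum fun k _ => hmν k
  have hν'univ : ν' Set.univ = δ := by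
    have h1 : ν' Set.univ = ∑ k ∈ Finset.range (K+1), (ν (c k) - m k) := by
      rw [hν', Measure.finset_sum_apply]
      simp only [hQ, Measure.smul_apply, smul_eq_mul, Measure.restrict_apply_univ]
      exact Finset.sum_congr rfl fun k _ => hbQ k
    have h2 : ν' Set.univ + ∑ k ∈ Finset.range (K+1), m k = 1 := by
      rw [h1, ← Finset.sum_add_distrib, ← hνsum]
      exact Finset.sum_congr rfl fun k _ => tsub_add_cancel_of_le (hmν k)
    rw [hδ]
    exact ENNReal.eq_sub_of_add_eq hmsum_ne h2
  have hμ'univ : μ' Set.univ = δ := by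
    have h1 : μ' Set.univ = ∑ k ∈ Finset.range (K+1), (μ (c k) - m k) := by
      rw [hμ', Measure.finset_sum_apply]
      simp only [hP, Measure.smul_apply, smul_eq_mul, Measure.restrict_apply_univ]
      exact Finset.sum_congr rfl fun k _ => haP k
    have h2 : μ' Set.univ + ∑ k ∈ Finset.range (K+1), m k = 1 := by
      rw [h1, ← Finset.sum_add_distrib, ← hμsum]
      exact Finset.sum_congr rfl fun k _ => tsub_add_cancel_of_le (hmμ k)
    rw [hδ]
    exact ENNReal.eq_sub_of_add_eq hmsum_ne h2
  have hδ_le : δ ≤ 1 := tsub_le_self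
  have hδ_ne : δ ≠ ∞ := (hδ_le.trans_lt ENNReal.one_lt_top).ne
  haveI : IsFiniteMeasure μ' := ⟨by rw [hμ'univ]; exact hδ_le.trans_lt ENNReal.one_lt_top⟩
  haveI : IsFiniteMeasure ν' := ⟨by rw [hν'univ]; exact hδ_le.trans_lt ENNReal.one_lt_top⟩
  -- the coupling
  set π : Measure (X × X) :=
    (∑ k ∈ Finset.range (K+1), t k • ((P k).prod (Q k))) + δ⁻¹ • (μ'.prod ν') with hπ
  have hμ'_le : μ' ≤ μ := by
    refine Measure.le_iff'.2 fun s => ?_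
    conv_rhs => rw [← sum_restrict_eq μ c K hmeas hdisj hcover]
    rw [hμ', Measure.finset_sum_apply, Measure.finset_sum_apply]
    refine Finset.sum_le_sum fun k _ => ?_
    simp only [Measure.smul_apply, smul_eq_mul]
    exact mul_le_of_le_one_left zero_le tsub_le_self
  have hν'_le : ν' ≤ ν := by
    refine Measure.le_iff'.2 fun s => ?_
    conv_rhs => rw [← sum_restrict_eq ν c K hmeas hdisj hcover]
    rw [hν', Measure.finset_sum_apply, Measure.finset_sum_apply]
    refine Finset.sum_le_sum fun k _ => ?_
    simp only [Measure.smul_apply, smul_eq_mul]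
    exact mul_le_of_le_one_left zero_le tsub_le_self
  -- leftover piece rescaled has the right marginals
  have hkey_μ : δ⁻¹ • (δ • μ') = μ' := by
    rcases eq_or_ne δ 0 with h0 | h0
    · have : μ' = 0 := by
        rw [← Measure.measure_univ_eq_zero, hμ'univ, h0]
      rw [this]; simp
    · rw [smul_smul, ENNReal.inv_mul_cancel h0 hδ_ne, one_smul]
  have hkey_ν : δ⁻¹ • (δ • ν') = ν' := by
    rcases eq_or_ne δ 0 with h0 | h0
    · have : ν' = 0 := by
        rw [← Measure.measure_univ_eq_zero, hν'univ, h0]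
      rw [this]; simp
    · rw [smul_smul, ENNReal.inv_mul_cancel h0 hδ_ne, one_smul]
  have hcoupling : IsCoupling π μ ν := by
    constructor
    · -- first marginal
      rw [hπ, Measure.map_add _ _ measurable_fst, Measure.map_smul,
        map_finset_sum measurable_fst]
      have e1 : ∀ k ∈ Finset.range (K+1),
          (t k • ((P k).prod (Q k))).map Prod.fst = a k • P k := by
        intro k _
        rw [Measure.map_smul, Measure.map_fst_prod, smul_smul, hQ,
          Measure.restrict_apply_univ, hak]
      rw [Finset.sum_congr rfl e1, Measure.map_fst_prod, hν'univ, hkey_μ]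
      calc (∑ k ∈ Finset.range (K+1), a k • P k) + μ'
          = ∑ k ∈ Finset.range (K+1), (a k • P k + (1 - a k) • P k) := by
            rw [hμ', Finset.sum_add_distrib]
        _ = ∑ k ∈ Finset.range (K+1), P k := by
            refine Finset.sum_congr rfl fun k _ => ?_
            rw [← add_smul, add_tsub_cancel_of_le (hak_le k), one_smul]
        _ = μ := sum_restrict_eq μ c K hmeas hdisj hcover
    · -- second marginal
      rw [hπ, Measure.map_add _ _ measurable_snd, Measure.map_smul,
        map_finset_sum measurable_snd]
      have e1 : ∀ k ∈ Finset.range (K+1),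
          (t k • ((P k).prod (Q k))).map Prod.snd = b k • Q k := by
        intro k _
        rw [Measure.map_smul, Measure.map_snd_prod, smul_smul, hP,
          Measure.restrict_apply_univ, hbk]
      rw [Finset.sum_congr rfl e1, Measure.map_snd_prod, hμ'univ, hkey_ν]
      calc (∑ k ∈ Finset.range (K+1), b k • Q k) + ν'
          = ∑ k ∈ Finset.range (K+1), (b k • Q k + (1 - b k) • Q k) := by
            rw [hν', Finset.sum_add_distrib]
        _ = ∑ k ∈ Finset.range (K+1), Q k := by
            refine Finset.sum_congr rfl fun k _ => ?_
            rw [← add_smul, add_tsub_cancel_of_le (hbk_le k), one_smul]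
        _ = ν := sum_restrict_eq ν c K hmeas hdisj hcover
  refine ⟨π, hcoupling, ?_⟩
  -- decompose the integral
  have hint : ∫⁻ q : X × X, edist q.1 q.2 ^ p ∂π
      = (∑ k ∈ Finset.range (K+1),
          t k * ∫⁻ q : X × X, edist q.1 q.2 ^ p ∂((P k).prod (Q k)))
        + δ⁻¹ * ∫⁻ q : X × X, edist q.1 q.2 ^ p ∂(μ'.prod ν') := by
    rw [hπ, lintegral_add_measure, lintegral_smul_measure, lintegral_finset_sum_measure]
    congr 1
    exact Finset.sum_congr rfl fun k _ => lintegral_smul_measure _ _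
  -- small cells
  have hcell : ∀ k, k < K →
      t k * ∫⁻ q : X × X, edist q.1 q.2 ^ p ∂((P k).prod (Q k)) ≤ ε ^ p * m k := by
    intro k hk
    have hsub : ∫⁻ q : X × X, edist q.1 q.2 ^ p ∂((P k).prod (Q k))
        ≤ ε ^ p * (μ (c k) * ν (c k)) := by
      simp only [hP, hQ]
      rw [Measure.prod_restrict]
      calc ∫⁻ q in (c k ×ˢ c k), edist q.1 q.2 ^ p ∂(μ.prod ν)
          ≤ ∫⁻ _q in (c k ×ˢ c k), ε ^ p ∂(μ.prod ν) := by
            refine setLIntegral_mono measurable_const fun q hq => ?_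
            exact ENNReal.rpow_le_rpow (hsmall k hk q.1 hq.1 q.2 hq.2) hp1
        _ = ε ^ p * (μ (c k) * ν (c k)) := by
            rw [setLIntegral_const, Measure.prod_prod]
    calc t k * ∫⁻ q : X × X, edist q.1 q.2 ^ p ∂((P k).prod (Q k))
        ≤ t k * (ε ^ p * (μ (c k) * ν (c k))) := mul_le_mul_right hsub _
      _ = ε ^ p * (t k * (μ (c k) * ν (c k))) := by ring
      _ ≤ ε ^ p * m k := mul_le_mul_right (htμν k) _
  have hsum_small : ∑ k ∈ Finset.range K,
      t k * ∫⁻ q : X × X, edist q.1 q.2 ^ p ∂((P k).prod (Q k)) ≤ ε ^ p := by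
    calc ∑ k ∈ Finset.range K, t k * ∫⁻ q : X × X, edist q.1 q.2 ^ p ∂((P k).prod (Q k))
        ≤ ∑ k ∈ Finset.range K, ε ^ p * m k :=
          Finset.sum_le_sum fun k hk => hcell k (Finset.mem_range.1 hk)
      _ = ε ^ p * ∑ k ∈ Finset.range K, m k := by rw [Finset.mul_sum]
      _ ≤ ε ^ p * 1 := by
          refine mul_le_mul_right ?_ _
          calc ∑ k ∈ Finset.range K, m k
              ≤ ∑ k ∈ Finset.range (K+1), m k :=
                Finset.sum_le_sum_of_subset (Finset.range_subset_range.2 (Nat.le_succ K))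
            _ ≤ ∑ k ∈ Finset.range (K+1), ν (c k) := Finset.sum_le_sum fun k _ => hmν k
            _ = 1 := hνsum
      _ = ε ^ p := mul_one _
  -- generic bound for a product piece
  have hmass : ∀ k, ((P k).prod (Q k)) Set.univ = μ (c k) * ν (c k) := by
    intro k
    rw [← Set.univ_prod_univ, Measure.prod_prod]
    simp only [hP, hQ, Measure.restrict_apply_univ]
  have hpt : ∀ k, ∫⁻ q : X × X, edist q.1 q.2 ^ p ∂((P k).prod (Q k))
      ≤ R ^ p * (μ (c k) * ν (c k))
        + R ^ (p - 2) * ∫⁻ q : X × X, edist q.1 q.2 ^ (2:ℕ) ∂((P k).prod (Q k)) := by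
    intro k
    calc ∫⁻ q : X × X, edist q.1 q.2 ^ p ∂((P k).prod (Q k))
        ≤ ∫⁻ q : X × X, (R ^ p + R ^ (p - 2) * edist q.1 q.2 ^ (2:ℕ)) ∂((P k).prod (Q k)) :=
          lintegral_mono fun q => rpow_le_aux hR0 hp1 hp2 (edist_ne_top _ _)
      _ = R ^ p * (μ (c k) * ν (c k))
          + R ^ (p - 2) * ∫⁻ q : X × X, edist q.1 q.2 ^ (2:ℕ) ∂((P k).prod (Q k)) := by
          rw [lintegral_add_left measurable_const, lintegral_const,
            lintegral_const_mul _ meas_edist_sq, hmass k]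
  have hsqK : ∫⁻ q : X × X, edist q.1 q.2 ^ (2:ℕ) ∂((P K).prod (Q K))
      ≤ 4 * (ν (c K) * M + μ (c K) * M) := by
    refine (prod_moment (P K) (Q K) x₀).trans ?_
    have e1 : ∫⁻ x, edist x x₀ ^ (2:ℕ) ∂(P K) ≤ M :=
      (lintegral_mono' Measure.restrict_le_self le_rfl).trans hμM
    have e2 : ∫⁻ x, edist x x₀ ^ (2:ℕ) ∂(Q K) ≤ M :=
      (lintegral_mono' Measure.restrict_le_self le_rfl).trans hνM
    have e3 : (Q K) Set.univ ≤ ν (c K) := le_of_eq (by simp [hQ])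
    have e4 : (P K) Set.univ ≤ μ (c K) := le_of_eq (by simp [hP])
    gcongr
  have hK : t K * ∫⁻ q : X × X, edist q.1 q.2 ^ p ∂((P K).prod (Q K))
      ≤ R ^ p * m K + 8 * M * R ^ (p - 2) := by
    have h1 : t K * ν (c K) ≤ 1 := by rw [hak]; exact hak_le K
    have h2 : t K * μ (c K) ≤ 1 := by rw [hbk]; exact hbk_le K
    calc t K * ∫⁻ q : X × X, edist q.1 q.2 ^ p ∂((P K).prod (Q K))
        ≤ t K * (R ^ p * (μ (c K) * ν (c K)) + R ^ (p - 2) * (4 * (ν (c K) * M + μ (c K) * M))) := by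
          refine mul_le_mul_right ((hpt K).trans ?_) _
          exact add_le_add_right (mul_le_mul_right hsqK _) _
      _ = R ^ p * (t K * (μ (c K) * ν (c K)))
          + 4 * M * R ^ (p - 2) * (t K * ν (c K)) + 4 * M * R ^ (p - 2) * (t K * μ (c K)) := by
          ring
      _ ≤ R ^ p * m K + 4 * M * R ^ (p - 2) * 1 + 4 * M * R ^ (p - 2) * 1 := by
          exact add_le_add (add_le_add (mul_le_mul_right (htμν K) _)
            (mul_le_mul_right h1 _)) (mul_le_mul_right h2 _)
      _ = R ^ p * m K + 8 * M * R ^ (p - 2) := by ring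
  -- leftover piece
  have hrest : δ⁻¹ * ∫⁻ q : X × X, edist q.1 q.2 ^ p ∂(μ'.prod ν')
      ≤ R ^ p * δ + 8 * M * R ^ (p - 2) := by
    have hptr : ∫⁻ q : X × X, edist q.1 q.2 ^ p ∂(μ'.prod ν')
        ≤ R ^ p * (δ * δ)
          + R ^ (p - 2) * ∫⁻ q : X × X, edist q.1 q.2 ^ (2:ℕ) ∂(μ'.prod ν') := by
      calc ∫⁻ q : X × X, edist q.1 q.2 ^ p ∂(μ'.prod ν')
          ≤ ∫⁻ q : X × X, (R ^ p + R ^ (p - 2) * edist q.1 q.2 ^ (2:ℕ)) ∂(μ'.prod ν') :=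
            lintegral_mono fun q => rpow_le_aux hR0 hp1 hp2 (edist_ne_top _ _)
        _ = R ^ p * (δ * δ)
            + R ^ (p - 2) * ∫⁻ q : X × X, edist q.1 q.2 ^ (2:ℕ) ∂(μ'.prod ν') := by
            rw [lintegral_add_left measurable_const, lintegral_const,
              lintegral_const_mul _ meas_edist_sq, ← Set.univ_prod_univ, Measure.prod_prod,
              hμ'univ, hν'univ]
    have hsqr : ∫⁻ q : X × X, edist q.1 q.2 ^ (2:ℕ) ∂(μ'.prod ν')
        ≤ 4 * (δ * M + δ * M) := by
      refine (prod_moment μ' ν' x₀).trans ?_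
      have e1 : ∫⁻ x, edist x x₀ ^ (2:ℕ) ∂μ' ≤ M :=
        (lintegral_mono' hμ'_le le_rfl).trans hμM
      have e2 : ∫⁻ x, edist x x₀ ^ (2:ℕ) ∂ν' ≤ M :=
        (lintegral_mono' hν'_le le_rfl).trans hνM
      have e3 : ν' Set.univ ≤ δ := le_of_eq hν'univ
      have e4 : μ' Set.univ ≤ δ := le_of_eq hμ'univ
      gcongr
    calc δ⁻¹ * ∫⁻ q : X × X, edist q.1 q.2 ^ p ∂(μ'.prod ν')
        ≤ δ⁻¹ * (R ^ p * (δ * δ) + R ^ (p - 2) * (4 * (δ * M + δ * M))) := by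
          refine mul_le_mul_right (hptr.trans ?_) _
          exact add_le_add_right (mul_le_mul_right hsqr _) _
      _ = (δ⁻¹ * δ) * (R ^ p * δ + 8 * M * R ^ (p - 2)) := by ring
      _ ≤ 1 * (R ^ p * δ + 8 * M * R ^ (p - 2)) := mul_le_mul_left (inv_mul_le_one' δ) _
      _ = R ^ p * δ + 8 * M * R ^ (p - 2) := one_mul _
  rw [hint, Finset.sum_range_succ]
  refine (add_le_add (add_le_add hsum_small hK) hrest).trans (le_of_eq ?_)
  ring
end

theorem exists_partition
    {X : Type*} [MetricSpace X] [SecondCountableTopology X] [Nonempty X]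
    [MeasurableSpace X] [BorelSpace X]
    (ν : Measure X) [IsProbabilityMeasure ν] (ε : ℝ) (hε : 0 < ε)
    (εν : ℝ≥0∞) (hεν : εν ≠ 0) :
    ∃ (K : ℕ) (c : ℕ → Set X),
      (∀ k, MeasurableSet (c k)) ∧
      Set.PairwiseDisjoint ↑(Finset.range (K+1)) c ∧
      (⋃ k ∈ Finset.range (K+1), c k) = Set.univ ∧
      (∀ k < K, ∀ x ∈ c k, ∀ y ∈ c k, edist x y ≤ ENNReal.ofReal ε) ∧
      ν (c K) ≤ εν ∧
      (∀ k ≤ K, ν (frontier (c k)) = 0) := by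
  classical
  set xs : ℕ → X := TopologicalSpace.denseSeq X with hxs
  have hdense : DenseRange xs := TopologicalSpace.denseRange_denseSeq X
  have hradii : ∀ n : ℕ, ∃ r : ℝ, r ∈ Set.Ioo (ε/4) (ε/2) ∧
      ν (frontier (Metric.ball (xs n) r)) = 0 := by
    intro n
    obtain ⟨r, hr, hnull⟩ := MeasureTheory.exists_null_frontier_thickening ν {xs n}
      (by linarith : ε/4 < ε/2)
    refine ⟨r, hr, ?_⟩
    rwa [Metric.thickening_singleton] at hnull
  choose r hrIoo hrnull using hradii
  set B : ℕ → Set X := fun n => Metric.ball (xs n) (r n) with hB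
  have hBmeas : ∀ n, MeasurableSet (B n) := fun n => Metric.isOpen_ball.measurableSet
  set s : ℕ → Set X := fun n => ⋃ m ∈ Finset.range n, B m with hs
  have hsmeas : ∀ n, MeasurableSet (s n) := fun n =>
    Finset.measurableSet_biUnion _ fun m _ => hBmeas m
  have hsmono : Monotone s := by
    intro i j hij
    exact Set.biUnion_subset_biUnion_left (Finset.range_subset_range.2 hij)
  have hBsub : ∀ n, B n ⊆ s (n+1) := by
    intro n
    exact Set.subset_biUnion_of_mem (Finset.self_mem_range_succ n)
  have hsuB : (⋃ n, s n) = Set.univ := by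
    apply Set.eq_univ_of_univ_subset
    intro x _
    obtain ⟨n, hn⟩ := Metric.denseRange_iff.1 hdense x (ε/4) (by linarith)
    have hx : x ∈ B n := Metric.mem_ball.2 (lt_trans hn (hrIoo n).1)
    exact Set.mem_iUnion.2 ⟨n+1, hBsub n hx⟩
  have htend : Tendsto (fun n => ν (s n)) atTop (𝓝 1) := by
    have := tendsto_measure_iUnion_atTop (μ := ν) hsmono
    rwa [hsuB, measure_univ] at this
  have hev : ∀ᶠ K in atTop, 1 < εν + ν (s K) := by
    have h1 : Tendsto (fun n => εν + ν (s n)) atTop (𝓝 (εν + 1)) :=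
      tendsto_const_nhds.add htend
    have h2 : (1:ℝ≥0∞) < εν + 1 := by
      rw [add_comm]
      exact ENNReal.lt_add_right ENNReal.one_ne_top hεν
    exact h1.eventually (eventually_gt_nhds h2)
  obtain ⟨K, hK⟩ := hev.exists
  set c : ℕ → Set X := fun k => if k < K then B k \ s k else (s K)ᶜ with hc
  have hck : ∀ k, k < K → c k = B k \ s k := fun k hk => by rw [hc]; simp [hk]
  have hcK : c K = (s K)ᶜ := by rw [hc]; simp
  have hckn : ∀ k, ¬ (k < K) → c k = (s K)ᶜ := fun k hk => by rw [hc]; simp [hk]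
  have hcmeas : ∀ k, MeasurableSet (c k) := by
    intro k
    by_cases hk : k < K
    · rw [hck k hk]; exact (hBmeas k).diff (hsmeas k)
    · rw [hckn k hk]; exact (hsmeas K).compl
  have hcsub : ∀ i, i < K → ∀ j, i < j → j ≤ K → c i ⊆ s j := by
    intro i hi j hij hjK
    rw [hck i hi]
    exact (Set.diff_subset.trans (hBsub i)).trans (hsmono hij)
  have hdisj : Set.PairwiseDisjoint ↑(Finset.range (K+1)) c := by
    have key : ∀ i j, i < j → j ≤ K → Disjoint (c i) (c j) := by
      intro i j hij hjK
      have hiK : i < K := lt_of_lt_of_le hij hjK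
      have hsub : c i ⊆ s j := hcsub i hiK j hij hjK
      rcases lt_or_eq_of_le hjK with hj | hj
      · rw [hck j hj]
        exact Set.disjoint_of_subset_left hsub disjoint_sdiff_right
      · subst hj
        rw [hcK]
        exact (disjoint_compl_right).mono_left hsub
    intro i hi j hj hij
    rcases lt_or_gt_of_ne hij with h | h
    · exact key i j h (Nat.lt_succ_iff.1 (Finset.mem_range.1 hj))
    · exact (key j i h (Nat.lt_succ_iff.1 (Finset.mem_range.1 hi))).symm
  have hpartial : ∀ n, n ≤ K → (⋃ k ∈ Finset.range n, c k) = s n := by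
    intro n
    induction n with
    | zero => intro _; simp [hs]
    | succ n ih =>
        intro hn
        have hnK : n < K := hn
        have hsucc : s (n+1) = B n ∪ s n := by
          simp only [hs]
          rw [Finset.range_add_one, Finset.set_biUnion_insert]
        rw [Finset.range_add_one, Finset.set_biUnion_insert, ih (le_of_lt hnK), hck n hnK,
          Set.diff_union_self, hsucc]
  have hcover : (⋃ k ∈ Finset.range (K+1), c k) = Set.univ := by
    rw [Finset.range_add_one, Finset.set_biUnion_insert, hpartial K le_rfl, hcK]
    exact Set.compl_union_self _
  have hsmall : ∀ k < K, ∀ x ∈ c k, ∀ y ∈ c k, edist x y ≤ ENNReal.ofReal ε := by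
    intro k hk x hx y hy
    rw [hck k hk] at hx hy
    have hx' : dist x (xs k) < r k := Metric.mem_ball.1 hx.1
    have hy' : dist y (xs k) < r k := Metric.mem_ball.1 hy.1
    have : dist x y ≤ ε := by
      have := dist_triangle x (xs k) y
      rw [dist_comm (xs k) y] at this
      have hr2 : r k < ε/2 := (hrIoo k).2
      linarith
    rw [edist_dist]
    exact ENNReal.ofReal_le_ofReal this
  have hrestsmall : ν (c K) ≤ εν := by
    rw [hcK, measure_compl (hsmeas K) (measure_ne_top _ _), measure_univ]
    exact tsub_le_iff_right.2 hK.le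
  have hsfrontier : ∀ n, ν (frontier (s n)) = 0 := by
    intro n
    induction n with
    | zero => simp [hs]
    | succ n ih =>
        have hsucc : s (n+1) = s n ∪ B n := by
          simp only [hs]
          rw [Finset.range_add_one, Finset.set_biUnion_insert, Set.union_comm]
        rw [hsucc]
        refine measure_mono_null ?_ (measure_union_null ih (hrnull n))
        exact (frontier_union_subset _ _).trans
          (Set.union_subset_union Set.inter_subset_left Set.inter_subset_right)
  have hfrontier : ∀ k ≤ K, ν (frontier (c k)) = 0 := by
    intro k hk
    rcases lt_or_eq_of_le hk with h | h
    · rw [hck k h, Set.diff_eq]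
      refine measure_mono_null ?_ (measure_union_null (hrnull k) (hsfrontier k))
      refine (frontier_inter_subset _ _).trans ?_
      refine Set.union_subset_union Set.inter_subset_left ?_
      refine Set.inter_subset_right.trans ?_
      rw [frontier_compl]
    · rw [h, hcK, frontier_compl]
      exact hsfrontier K
  exact ⟨K, c, hcmeas, hdisj, hcover, hsmall, hrestsmall, hfrontier⟩


theorem exists_moment_bound
    {X : Type*} [MetricSpace X] [SecondCountableTopology X] [Nonempty X]
    [MeasurableSpace X] [BorelSpace X]
    (μ : ℕ → Measure X) (ν : Measure X)
    [∀ i, IsProbabilityMeasure (μ i)] [IsProbabilityMeasure ν]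
    (h_opens : ∀ G, IsOpen G → ν G ≤ atTop.liminf (fun i => μ i G))
    (C : ℝ≥0∞) (hC : C ≠ ⊤) (hvar : ∀ i, var2 (μ i) (μ i) ≤ C) :
    ∃ (x₀ : X) (M : ℝ≥0∞), M ≠ ⊤ ∧
      (∀ᶠ i in atTop, ∫⁻ x, edist x x₀ ^ (2:ℕ) ∂(μ i) ≤ M) ∧
      ∫⁻ x, edist x x₀ ^ (2:ℕ) ∂ν ≤ M := by
  classical
  set x₀ : X := Classical.arbitrary X with hx₀
  set C' : ℝ≥0∞ := C + 1 with hC'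
  have hC'0 : C' ≠ 0 := by simp [hC']
  have hC'top : C' ≠ ⊤ := by simp [hC', hC]
  have h2C'0 : (2 : ℝ≥0∞) * C' ≠ 0 := mul_ne_zero two_ne_zero hC'0
  have h2C'top : (2 : ℝ≥0∞) * C' ≠ ⊤ := ENNReal.mul_ne_top ENNReal.ofNat_ne_top hC'top
  set g : ℕ → X → ℝ≥0∞ := fun i y => ∫⁻ x, edist x y ^ (2:ℕ) ∂(μ i) with hg
  have hg_meas : ∀ i, Measurable (g i) := by
    intro i
    exact Measurable.lintegral_prod_right'
      (f := fun q : X × X => edist q.2 q.1 ^ (2:ℕ)) (by fun_prop)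
  have hgint : ∀ i, ∫⁻ y, g i y ∂(μ i) ≤ C := by
    intro i
    refine le_trans (le_of_eq ?_) (hvar i)
    rw [var2]
    exact lintegral_congr fun a => lintegral_congr fun b => by rw [edist_comm]
  have markov : ∀ i, μ i {y | 2 * C' ≤ g i y} ≤ 2⁻¹ := by
    intro i
    have h := mul_meas_ge_le_lintegral₀ (μ := μ i) (hg_meas i).aemeasurable (2 * C')
    have h' : 2 * C' * μ i {y | 2 * C' ≤ g i y} ≤ C' :=
      h.trans ((hgint i).trans (by rw [hC']; exact le_self_add))
    calc μ i {y | 2 * C' ≤ g i y}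
        = (2 * C')⁻¹ * (2 * C' * μ i {y | 2 * C' ≤ g i y}) := by
          rw [← mul_assoc, ENNReal.inv_mul_cancel h2C'0 h2C'top, one_mul]
      _ ≤ (2 * C')⁻¹ * C' := mul_le_mul_right h' _
      _ = 2⁻¹ * (C'⁻¹ * C') := by
          rw [ENNReal.mul_inv (Or.inl two_ne_zero) (Or.inl ENNReal.ofNat_ne_top), mul_assoc]
      _ ≤ 2⁻¹ * 1 := mul_le_mul_right (inv_mul_le_one' _) _
      _ = 2⁻¹ := mul_one _
  -- a ball of large ν-measure
  have htendball : Tendsto (fun n : ℕ => ν (Metric.ball x₀ n)) atTop (𝓝 1) := by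
    have hmono : Monotone (fun n : ℕ => Metric.ball x₀ (n : ℝ)) := fun a b hab =>
      Metric.ball_subset_ball (Nat.cast_le.2 hab)
    have := tendsto_measure_iUnion_atTop (μ := ν) hmono
    rwa [Metric.iUnion_ball_nat, measure_univ] at this
  obtain ⟨n₀, hn₀⟩ := (htendball.eventually (eventually_gt_nhds
    (by norm_num : (2⁻¹ : ℝ≥0∞) < 1))).exists
  have hliminf : (2⁻¹ : ℝ≥0∞) < atTop.liminf (fun i => μ i (Metric.ball x₀ n₀)) :=
    hn₀.trans_le (h_opens _ Metric.isOpen_ball)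
  have hev : ∀ᶠ i in atTop, (2⁻¹ : ℝ≥0∞) < μ i (Metric.ball x₀ n₀) :=
    eventually_lt_of_lt_liminf hliminf
  set M : ℝ≥0∞ := 8 * C' + 4 * (ENNReal.ofReal n₀) ^ (2:ℕ) with hM
  have hM_ne : M ≠ ⊤ := by
    rw [hM]
    refine ENNReal.add_ne_top.2 ⟨ENNReal.mul_ne_top (by norm_num) hC'top,
      ENNReal.mul_ne_top (by norm_num) ?_⟩
    exact (ENNReal.pow_ne_top ENNReal.ofReal_ne_top)
  have hevmom : ∀ᶠ i in atTop, ∫⁻ x, edist x x₀ ^ (2:ℕ) ∂(μ i) ≤ M := by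
    filter_upwards [hev] with i hi
    -- find a good point y
    set Sg : Set X := {y | 2 * C' ≤ g i y} with hSg
    have hSg_meas : MeasurableSet Sg := measurableSet_le measurable_const (hg_meas i)
    have hne : (Metric.ball x₀ n₀ ∩ Sgᶜ).Nonempty := by
      refine nonempty_of_measure_ne_zero (μ := μ i) ?_
      intro h0
      have hsub : Metric.ball x₀ n₀ ⊆ (Metric.ball x₀ n₀ ∩ Sgᶜ) ∪ Sg := by
        intro x hx
        by_cases hxs : x ∈ Sg
        · exact Or.inr hxs
        · exact Or.inl ⟨hx, hxs⟩
      have : μ i (Metric.ball x₀ n₀) ≤ 2⁻¹ := by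
        calc μ i (Metric.ball x₀ n₀) ≤ μ i ((Metric.ball x₀ n₀ ∩ Sgᶜ) ∪ Sg) :=
              measure_mono hsub
          _ ≤ μ i (Metric.ball x₀ n₀ ∩ Sgᶜ) + μ i Sg := measure_union_le _ _
          _ = μ i Sg := by rw [h0, zero_add]
          _ ≤ 2⁻¹ := markov i
      exact absurd this (not_le.2 hi)
    obtain ⟨y, hyball, hySg⟩ := hne
    have hgy : g i y ≤ 2 * C' := le_of_lt (not_le.1 hySg)
    have hyd : edist y x₀ ≤ ENNReal.ofReal n₀ := by
      rw [edist_dist]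
      exact ENNReal.ofReal_le_ofReal (le_of_lt (Metric.mem_ball.1 hyball))
    have hmeas1 : Measurable fun x : X => edist x y ^ (2:ℕ) := by fun_prop
    calc ∫⁻ x, edist x x₀ ^ (2:ℕ) ∂(μ i)
        ≤ ∫⁻ x, 4 * (edist x y ^ (2:ℕ) + edist y x₀ ^ (2:ℕ)) ∂(μ i) :=
          lintegral_mono fun x => edist_sq_le x x₀ y
      _ = 4 * (g i y + edist y x₀ ^ (2:ℕ)) := by
          rw [lintegral_const_mul (f := fun x : X => edist x y ^ (2:ℕ) + edist y x₀ ^ (2:ℕ)) _ (hmeas1.add measurable_const),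
            lintegral_add_right _ measurable_const, lintegral_const, measure_univ, mul_one]
      _ ≤ 4 * (2 * C' + (ENNReal.ofReal n₀) ^ (2:ℕ)) := by gcongr
      _ = M := by rw [hM]; ring
  refine ⟨x₀, M, hM_ne, hevmom, ?_⟩
  · -- moment bound for ν
    have hcont : Continuous fun x : X => dist x x₀ ^ (2:ℕ) :=
      (continuous_id.dist continuous_const).pow 2
    have hnn : (0 : X → ℝ) ≤ fun x => dist x x₀ ^ (2:ℕ) := fun x => by positivity
    have key := lintegral_le_liminf_lintegral_of_forall_isOpen_measure_le_liminf_measure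
      (μ := ν) (μs := μ) hcont hnn h_opens
    have heq : ∀ m : Measure X,
        ∫⁻ x, ENNReal.ofReal (dist x x₀ ^ (2:ℕ)) ∂m = ∫⁻ x, edist x x₀ ^ (2:ℕ) ∂m := by
      intro m
      refine lintegral_congr fun x => ?_
      rw [ENNReal.ofReal_pow dist_nonneg, ← edist_dist]
    rw [heq] at key
    simp_rw [heq] at key
    exact key.trans (Filter.liminf_le_of_frequently_le' hevmom.frequently)


end WassAux

/-- If `μ i` converge weakly to `ν` on a complete separable metric space and have uniformly
bounded variance, then `W_p(μ i, ν)^p → 0` for every `p ∈ [1, 2)`. -/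
theorem stmt1 {X : Type*} [MetricSpace X] [CompleteSpace X]
    [TopologicalSpace.SeparableSpace X] [MeasurableSpace X] [BorelSpace X]
    (μ : ℕ → Measure X) (ν : Measure X)
    (hμ : ∀ i, IsProbabilityMeasure (μ i)) (hν : IsProbabilityMeasure ν)
    (hweak : ∀ f : BoundedContinuousFunction X ℝ,
      Tendsto (fun i => ∫ x, f x ∂(μ i)) atTop (nhds (∫ x, f x ∂ν)))
    (C : ℝ≥0∞) (hC : C ≠ ⊤) (hvar : ∀ i, var2 (μ i) (μ i) ≤ C) :
    ∀ p : ℝ, 1 ≤ p → p < 2 →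
      Tendsto (fun i => wassersteinPow p (μ i) ν) atTop (nhds 0) := by
  haveI : SecondCountableTopology X := UniformSpace.secondCountable_of_separable X
  haveI := hν
  haveI := fun i => hμ i
  rcases isEmpty_or_nonempty X with hE | hNE
  · exfalso
    have h1 : ν Set.univ = 1 := measure_univ
    rw [Set.univ_eq_empty_iff.2 hE, measure_empty] at h1
    exact zero_ne_one h1
  intro p hp1 hp2
  -- reformulate weak convergence
  set Pm : ℕ → ProbabilityMeasure X := fun i => ⟨μ i, hμ i⟩ with hPm
  set Qm : ProbabilityMeasure X := ⟨ν, hν⟩ with hQm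
  have hten : Tendsto Pm atTop (nhds Qm) :=
    MeasureTheory.ProbabilityMeasure.tendsto_iff_forall_integral_tendsto.2 hweak
  have h_opens : ∀ G, IsOpen G → ν G ≤ atTop.liminf (fun i => μ i G) := fun G hG =>
    MeasureTheory.ProbabilityMeasure.le_liminf_measure_open_of_tendsto hten hG
  have hconv : ∀ E : Set X, ν (frontier E) = 0 →
      Tendsto (fun i => μ i E) atTop (nhds (ν E)) := fun E hE =>
    MeasureTheory.ProbabilityMeasure.tendsto_measure_of_null_frontier_of_tendsto' hten hE
  obtain ⟨x₀, M, hM_ne, hMev, hMν⟩ := WassAux.exists_moment_bound μ ν h_opens C hC hvar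
  rw [ENNReal.tendsto_nhds_zero]
  intro δ₀ hδ₀
  set δ₁ : ℝ≥0∞ := min δ₀ 1 with hδ₁def
  have hδ₁0 : δ₁ ≠ 0 := (lt_min hδ₀ zero_lt_one).ne'
  have hδ₁top : δ₁ ≠ ⊤ := ((min_le_right _ _).trans_lt ENNReal.one_lt_top).ne
  have hhalf0 : δ₁ / 2 ≠ 0 := by
    rw [ne_eq, ENNReal.div_eq_zero_iff]
    push_neg
    exact ⟨hδ₁0, ENNReal.ofNat_ne_top⟩
  have hhalftop : δ₁ / 2 ≠ ⊤ := (ENNReal.half_le_self.trans_lt hδ₁top.lt_top).ne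
  -- choose R
  have h2p : (0:ℝ) < 2 - p := by linarith
  set t : ℝ≥0∞ := (δ₁ / 2) / (16 * M + 1) with ht_def
  have hden_ne : (16 : ℝ≥0∞) * M + 1 ≠ ⊤ :=
    ENNReal.add_ne_top.2 ⟨ENNReal.mul_ne_top (by norm_num) hM_ne, ENNReal.one_ne_top⟩
  have ht0 : t ≠ 0 := by
    rw [ht_def, ne_eq, ENNReal.div_eq_zero_iff]
    push_neg
    exact ⟨hhalf0, hden_ne⟩
  set R : ℝ≥0∞ := max 1 ((t⁻¹) ^ (1 / (2 - p))) with hR_def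
  have hR0 : R ≠ 0 := (zero_lt_one.trans_le (le_max_left _ _)).ne'
  have hRtop : R ≠ ⊤ := by
    have hx : (t⁻¹) ^ (1/(2-p)) ≠ ⊤ :=
      ENNReal.rpow_ne_top_of_nonneg (one_div_pos.2 h2p).le (ENNReal.inv_ne_top.2 ht0)
    exact (max_lt ENNReal.one_lt_top hx.lt_top).ne
  have hRP : R ^ (p - 2) ≤ t := by
    have h1 : (t⁻¹) ^ (1/(2-p)) ≤ R := le_max_right _ _
    have h2 : t⁻¹ ≤ R ^ (2-p) := by
      calc t⁻¹ = ((t⁻¹) ^ (1/(2-p))) ^ (2-p) := by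
            rw [← ENNReal.rpow_mul, one_div, inv_mul_cancel₀ h2p.ne', ENNReal.rpow_one]
        _ ≤ R ^ (2-p) := ENNReal.rpow_le_rpow h1 h2p.le
    have h3 : p - 2 = -(2-p) := by ring
    calc R ^ (p - 2) = (R ^ (2-p))⁻¹ := by rw [h3, ENNReal.rpow_neg]
      _ ≤ (t⁻¹)⁻¹ := ENNReal.inv_le_inv.2 h2
      _ = t := inv_inv t
  have hRbig : 16 * M * R ^ (p - 2) ≤ δ₁ / 2 := by
    calc 16 * M * R ^ (p - 2) ≤ 16 * M * t := mul_le_mul_right hRP _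
      _ = (δ₁ / 2) * ((16 * M) * (16 * M + 1)⁻¹) := by
          rw [ht_def, div_eq_mul_inv]; ring
      _ ≤ (δ₁ / 2) * 1 := by
          refine mul_le_mul_right ?_ _
          exact (mul_le_mul_left le_self_add _).trans (WassAux.mul_inv_le_one' _)
      _ = δ₁ / 2 := mul_one _
  -- choose ε
  have hRp_ne : R ^ p ≠ ⊤ := ENNReal.rpow_ne_top_of_nonneg (by linarith) hRtop
  set c₀ : ℝ≥0∞ := (δ₁ / 2) * (1 + 3 * R ^ p)⁻¹ with hc₀def
  have hden2_0 : (1:ℝ≥0∞) + 3 * R ^ p ≠ 0 :=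
    (lt_of_lt_of_le zero_lt_one le_self_add).ne'
  have hden2_top : (1:ℝ≥0∞) + 3 * R ^ p ≠ ⊤ :=
    ENNReal.add_ne_top.2 ⟨ENNReal.one_ne_top, ENNReal.mul_ne_top (by norm_num) hRp_ne⟩
  have hc₀0 : c₀ ≠ 0 := mul_ne_zero hhalf0 (ENNReal.inv_ne_zero.2 hden2_top)
  have hc₀top : c₀ ≠ ⊤ := ENNReal.mul_ne_top hhalftop (ENNReal.inv_ne_top.2 hden2_0)
  set ε : ℝ := min 1 c₀.toReal with hεdef
  have hε : 0 < ε := lt_min zero_lt_one (ENNReal.toReal_pos hc₀0 hc₀top)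
  set E : ℝ≥0∞ := ENNReal.ofReal ε with hEdef
  have hE0 : E ≠ 0 := (ENNReal.ofReal_pos.2 hε).ne'
  have hE1 : E ≤ 1 := ENNReal.ofReal_le_one.2 (min_le_left _ _)
  have hEtop : E ≠ ⊤ := ENNReal.ofReal_ne_top
  have hEc₀ : E ≤ c₀ := by
    rw [hEdef, ← ENNReal.ofReal_toReal hc₀top]
    exact ENNReal.ofReal_le_ofReal (min_le_right _ _)
  -- partition
  obtain ⟨K, c, hcmeas, hcdisj, hccover, hcsmall, hcrest, hcfront⟩ :=
    WassAux.exists_partition ν ε hε E hE0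
  -- eventual lower bound for the sum of mins
  have hmconv : ∀ k ∈ Finset.range K,
      Tendsto (fun i => min (μ i (c k)) (ν (c k))) atTop (nhds (ν (c k))) := by
    intro k hk
    have := (hconv (c k) (hcfront k (Finset.mem_range.1 hk).le)).min
      (tendsto_const_nhds (x := ν (c k)))
    simpa using this
  have hsum_tendsto : Tendsto
      (fun i => ∑ k ∈ Finset.range K, min (μ i (c k)) (ν (c k))) atTop
      (nhds (∑ k ∈ Finset.range K, ν (c k))) :=
    tendsto_finset_sum _ hmconv
  have hνtotal : (1:ℝ≥0∞) = ∑ k ∈ Finset.range (K+1), ν (c k) := by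
    have h := measure_biUnion_finset (μ := ν) hcdisj (fun k _ => hcmeas k)
    rw [hccover, measure_univ] at h
    exact h
  have hSnu_le : ∑ k ∈ Finset.range K, ν (c k) ≤ 1 := by
    rw [hνtotal]
    exact Finset.sum_le_sum_of_subset (Finset.range_subset_range.2 (Nat.le_succ K))
  have hSnu_top : ∑ k ∈ Finset.range K, ν (c k) ≠ ⊤ :=
    (hSnu_le.trans_lt ENNReal.one_lt_top).ne
  have hbound : (1:ℝ≥0∞) ≤ (∑ k ∈ Finset.range K, ν (c k)) + E := by
    rw [hνtotal, Finset.sum_range_succ]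
    exact add_le_add_right hcrest _
  have hgt : (1:ℝ≥0∞) < 2 * E + ∑ k ∈ Finset.range K, ν (c k) := by
    calc (1:ℝ≥0∞) ≤ (∑ k ∈ Finset.range K, ν (c k)) + E := hbound
      _ < (∑ k ∈ Finset.range K, ν (c k)) + E + E := ENNReal.lt_add_right
          (ENNReal.add_ne_top.2 ⟨hSnu_top, hEtop⟩) hE0
      _ = 2 * E + ∑ k ∈ Finset.range K, ν (c k) := by ring
  have hev2 : ∀ᶠ i in atTop,
      (1:ℝ≥0∞) < 2 * E + ∑ k ∈ Finset.range K, min (μ i (c k)) (ν (c k)) := by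
    have hlim : Tendsto (fun i => 2 * E + ∑ k ∈ Finset.range K, min (μ i (c k)) (ν (c k)))
        atTop (nhds (2 * E + ∑ k ∈ Finset.range K, ν (c k))) :=
      tendsto_const_nhds.add hsum_tendsto
    exact hlim.eventually (eventually_gt_nhds hgt)
  -- conclude
  filter_upwards [hMev, hev2] with i hMi hsi
  obtain ⟨π, hπc, hπint⟩ := WassAux.exists_coupling (μ i) ν c K hcmeas hcdisj hccover x₀ M
    hMi hMν p (by linarith) hp2.le R hR0 E hcsmall
  refine le_trans (iInf_le _ ⟨π, hπc⟩) (hπint.trans ?_)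
  have hKterm : min (μ i (c K)) (ν (c K)) ≤ E := (min_le_right _ _).trans hcrest
  have hδterm : 1 - ∑ k ∈ Finset.range (K+1), min (μ i (c k)) (ν (c k)) ≤ 2 * E := by
    refine tsub_le_iff_right.2 ?_
    refine le_trans hsi.le (add_le_add_right ?_ _)
    exact Finset.sum_le_sum_of_subset (Finset.range_subset_range.2 (Nat.le_succ K))
  have hεp : E ^ p ≤ E := by
    calc E ^ p ≤ E ^ (1:ℝ) := ENNReal.rpow_le_rpow_of_exponent_ge hE1 hp1
      _ = E := ENNReal.rpow_one _
  calc E ^ p + R ^ p * min (μ i (c K)) (ν (c K))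
        + R ^ p * (1 - ∑ k ∈ Finset.range (K+1), min (μ i (c k)) (ν (c k)))
        + 16 * M * R ^ (p - 2)
      ≤ E + R ^ p * E + R ^ p * (2 * E) + δ₁ / 2 :=
        add_le_add (add_le_add (add_le_add hεp (mul_le_mul_right hKterm _))
          (mul_le_mul_right hδterm _)) hRbig
    _ = E * (1 + 3 * R ^ p) + δ₁ / 2 := by ring
    _ ≤ c₀ * (1 + 3 * R ^ p) + δ₁ / 2 := add_le_add_left (mul_le_mul_left hEc₀ _) _
    _ = (δ₁ / 2) * ((1 + 3 * R ^ p)⁻¹ * (1 + 3 * R ^ p)) + δ₁ / 2 := by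
        rw [hc₀def]; ring
    _ ≤ (δ₁ / 2) * 1 + δ₁ / 2 :=
        add_le_add_left (mul_le_mul_right (WassAux.inv_mul_le_one' _) _) _
    _ = δ₁ := by rw [mul_one, ENNReal.add_halves]
    _ ≤ δ₀ := min_le_left _ _
end

section
/- Let (X, d) be a complete separable metric space, let (μ_i)_{i∈ℕ} be Borel probability measures on X converging weakly to a Borel probability measure μ on X, and let C < ∞ and x_i ∈ X satisfy ∫_X d(x_i, y)² dμ_i(y) ≤ C for every i. Then the sequence (x_i) is bounded: for every x₀ ∈ X one has sup_i d(x₀, x_i) < ∞. -/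
open MeasureTheory Filter
open scoped ENNReal

/-- If `μ i` converge weakly to `ν` on a complete separable metric space, and the points
`x i` have uniformly bounded second moment with respect to `μ i`, then the sequence
`(x i)` is bounded. -/
theorem stmt2 {X : Type*} [MetricSpace X] [CompleteSpace X]
    [TopologicalSpace.SeparableSpace X] [MeasurableSpace X] [BorelSpace X]
    (μ : ℕ → Measure X) (ν : Measure X)
    (hμ : ∀ i, IsProbabilityMeasure (μ i)) (hν : IsProbabilityMeasure ν)
    (hweak : ∀ f : BoundedContinuousFunction X ℝ,
      Tendsto (fun i => ∫ x, f x ∂(μ i)) atTop (nhds (∫ x, f x ∂ν)))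
    (C : ℝ≥0∞) (hC : C ≠ ⊤) (x : ℕ → X)
    (hx : ∀ i, ∫⁻ y, edist (x i) y ^ 2 ∂(μ i) ≤ C) :
    ∀ x₀ : X, ∃ B : ℝ, ∀ i, dist x₀ (x i) ≤ B := by
  intro x₀
  set P : ℕ → ProbabilityMeasure X := fun i => ⟨μ i, hμ i⟩ with hPdef
  set Q : ProbabilityMeasure X := ⟨ν, hν⟩ with hQdef
  have hP : Tendsto P atTop (nhds Q) :=
    ProbabilityMeasure.tendsto_iff_forall_integral_tendsto.mpr (fun f => hweak f)
  -- find a ball of positive `ν`-measure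
  obtain ⟨R, hR⟩ : ∃ R : ℕ, 0 < ν (Metric.ball x₀ R) := by
    by_contra h
    push_neg at h
    have hcov : (⋃ n : ℕ, Metric.ball x₀ n) = Set.univ := by
      ext y
      simp only [Set.mem_iUnion, Set.mem_univ, iff_true, Metric.mem_ball]
      exact exists_nat_gt (dist y x₀)
    have h0 : ν (⋃ n : ℕ, Metric.ball x₀ n) = 0 :=
      measure_iUnion_null fun n => le_antisymm (h n) zero_le
    rw [hcov, measure_univ] at h0
    exact one_ne_zero h0
  set a := ν (Metric.ball x₀ R) with ha
  have ha_top : a ≠ ⊤ := (measure_lt_top ν _).ne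
  have ha2 : a / 2 < a := ENNReal.half_lt_self hR.ne' ha_top
  have ha2_pos : (0 : ℝ≥0∞) < a / 2 := ENNReal.half_pos hR.ne'
  have ha2_top : a / 2 ≠ ⊤ := by
    exact (lt_of_le_of_lt ENNReal.half_le_self (lt_top_iff_ne_top.mpr ha_top)).ne
  -- liminf lower bound for the open ball
  have hlim : a ≤ atTop.liminf fun i => μ i (Metric.ball x₀ R) :=
    ProbabilityMeasure.le_liminf_measure_open_of_tendsto hP Metric.isOpen_ball
  have hev : ∀ᶠ i in atTop, a / 2 < μ i (Metric.ball x₀ R) :=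
    Filter.eventually_lt_of_lt_liminf (lt_of_lt_of_le ha2 hlim)
  obtain ⟨N, hN⟩ := Filter.eventually_atTop.mp hev
  -- choose n with C / n < a / 2
  obtain ⟨n, hn⟩ : ∃ n : ℕ, C / (a / 2) < n :=
    ENNReal.exists_nat_gt (ENNReal.div_lt_top hC ha2_pos.ne').ne
  have hn0 : ((n : ℝ≥0∞)) ≠ 0 := ((zero_le : (0 : ℝ≥0∞) ≤ _).trans_lt hn).ne'
  have hCn : C / n < a / 2 := by
    rw [ENNReal.div_lt_iff (Or.inl hn0) (Or.inl (ENNReal.natCast_ne_top n))]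
    rw [ENNReal.div_lt_iff (Or.inl ha2_pos.ne') (Or.inl ha2_top)] at hn
    rwa [mul_comm]
  -- Chebyshev
  have cheb : ∀ i, μ i {y | (n : ℝ≥0∞) ≤ edist (x i) y ^ 2} ≤ C / n := by
    intro i
    have hm : Measurable fun y : X => edist (x i) y ^ 2 :=
      ((ENNReal.continuous_pow 2).comp (continuous_const.edist continuous_id)).measurable
    have := (mul_meas_ge_le_lintegral (μ := μ i) hm (n : ℝ≥0∞)).trans (hx i)
    rw [ENNReal.le_div_iff_mul_le (Or.inl hn0) (Or.inl (ENNReal.natCast_ne_top n)), mul_comm]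
    exact this
  -- eventual bound on the distances
  have key : ∀ i, N ≤ i → dist x₀ (x i) ≤ (R : ℝ) + ((n : ℝ) + 1) := by
    intro i hi
    obtain ⟨y, hy_ball, hy_good⟩ :
        ∃ y, y ∈ Metric.ball x₀ R ∧ edist (x i) y ^ 2 < (n : ℝ≥0∞) := by
      by_contra h
      push_neg at h
      have hsub : Metric.ball x₀ (R : ℝ) ⊆ {y | (n : ℝ≥0∞) ≤ edist (x i) y ^ 2} :=
        fun y hy => h y hy
      exact lt_irrefl _ (((hN i hi).trans_le ((measure_mono hsub).trans (cheb i))).trans hCn)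
    have he : edist (x i) y < (n : ℝ≥0∞) + 1 := by
      by_contra h
      push_neg at h
      have h1 : (1 : ℝ≥0∞) ≤ edist (x i) y := le_trans (by simp) h
      have hlt : (n : ℝ≥0∞) < edist (x i) y ^ 2 := by
        calc (n : ℝ≥0∞) < n + 1 := ENNReal.lt_add_right (ENNReal.natCast_ne_top n) one_ne_zero
        _ ≤ edist (x i) y := h
        _ ≤ edist (x i) y ^ 2 := by
            rw [sq]
            exact le_mul_of_one_le_left zero_le h1
      exact absurd hy_good (not_lt.mpr hlt.le)
    have hd : dist (x i) y ≤ (n : ℝ) + 1 := by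
      have h' := he.le
      rw [edist_dist] at h'
      have h2 : ((n : ℝ≥0∞) + 1) = ENNReal.ofReal ((n : ℝ) + 1) := by
        rw [ENNReal.ofReal_add (by positivity) zero_le_one, ENNReal.ofReal_natCast,
          ENNReal.ofReal_one]
      rw [h2, ENNReal.ofReal_le_ofReal_iff (by positivity)] at h'
      exact h'
    calc dist x₀ (x i) ≤ dist x₀ y + dist y (x i) := dist_triangle _ _ _
    _ ≤ (R : ℝ) + ((n : ℝ) + 1) := by
        have h3 : dist x₀ y ≤ (R : ℝ) := by
          rw [dist_comm]
          exact (Metric.mem_ball.mp hy_ball).le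
        have h4 : dist y (x i) ≤ (n : ℝ) + 1 := by rw [dist_comm]; exact hd
        linarith
  -- combine with finitely many initial terms
  refine ⟨max ((R : ℝ) + ((n : ℝ) + 1))
    ((Finset.range (N + 1)).sup' (by simp) fun j => dist x₀ (x j)), fun i => ?_⟩
  rcases le_total N i with h | h
  · exact (key i h).trans (le_max_left _ _)
  · exact le_max_of_le_right
      (Finset.le_sup' (fun j => dist x₀ (x j)) (Finset.mem_range.mpr (Nat.lt_succ_of_le h)))
end

section
/- Let (X, d) be a metric space, τ > 0, and let ν be a Borel probability measure on X satisfying the Gaussian moment-generating bound at scale τ. Suppose H > 0 and z ∈ X satisfy ∫_X d(z, x)² dν(x) ≤ Hτ. Then for every r ≥ 0, ν({x ∈ X : d(x, z) ≥ √(Hτ) + r}) ≤ exp(−r²/(4τ)). -/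
open MeasureTheory
open scoped ENNReal

/-- Gaussian concentration for measures satisfying the Gaussian moment-generating bound:
if `ν` satisfies `∫ exp(λh) dν ≤ exp(τλ²)` for every bounded `1`-Lipschitz `h` with
`∫ h dν = 0` and every `λ > 0`, and `z` satisfies `∫ d(z,·)² dν ≤ Hτ`, then for every
`r ≥ 0` we have `ν({d(·,z) ≥ √(Hτ) + r}) ≤ exp(−r²/(4τ))`. -/
theorem stmt3 {X : Type*} [MetricSpace X] [MeasurableSpace X] [BorelSpace X]
    (τ : ℝ) (hτ : 0 < τ) (ν : Measure X) (hν : IsProbabilityMeasure ν)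
    (hGauss : ∀ h : X → ℝ, LipschitzWith 1 h → (∃ M : ℝ, ∀ x, |h x| ≤ M) →
      (∫ x, h x ∂ν) = 0 → ∀ l : ℝ, 0 < l →
        ∫ x, Real.exp (l * h x) ∂ν ≤ Real.exp (τ * l ^ 2))
    (H : ℝ) (hH : 0 < H) (z : X)
    (hz : ∫⁻ x, edist z x ^ 2 ∂ν ≤ ENNReal.ofReal (H * τ)) :
    ∀ r : ℝ, 0 ≤ r →
      ν {x | Real.sqrt (H * τ) + r ≤ dist x z} ≤
        ENNReal.ofReal (Real.exp (-(r ^ 2) / (4 * τ))) := by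
  intro r hr
  rcases hr.eq_or_lt with heq | hrpos
  · subst heq
    norm_num
    exact prob_le_one
  set C : ℝ := Real.sqrt (H * τ) + r with hCdef
  have hsqrt : 0 ≤ Real.sqrt (H * τ) := Real.sqrt_nonneg _
  have hC0 : 0 < C := by positivity
  set f : X → ℝ := fun x => min (dist x z) C with hfdef
  have hfL : LipschitzWith 1 f := by
    have := (LipschitzWith.dist_left z).min (LipschitzWith.const (b := C))
    simpa using this
  have hfcont : Continuous f := hfL.continuous
  have hf0 : ∀ x, 0 ≤ f x := fun x => le_min dist_nonneg hC0.le
  have hfC : ∀ x, f x ≤ C := fun x => min_le_right _ _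
  have hfabs : ∀ x, |f x| ≤ C := fun x => abs_le.2 ⟨le_trans (by linarith) (hf0 x), hfC x⟩
  have hfint : Integrable f ν :=
    (integrable_const C).mono' hfcont.aestronglyMeasurable
      (Filter.Eventually.of_forall fun x => by simpa using hfabs x)
  have hf2int : Integrable (fun x => f x ^ 2) ν :=
    (integrable_const (C ^ 2)).mono' (hfcont.pow 2).aestronglyMeasurable
      (Filter.Eventually.of_forall fun x => by
        rw [Real.norm_eq_abs, abs_pow]
        exact pow_le_pow_left₀ (abs_nonneg _) (hfabs x) 2)
  set m : ℝ := ∫ x, f x ∂ν with hmdef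
  have hm0 : 0 ≤ m := integral_nonneg hf0
  -- ∫ f² ≤ Hτ
  have hf2 : ∫ x, f x ^ 2 ∂ν ≤ H * τ := by
    have key : ∫⁻ x, ENNReal.ofReal (f x ^ 2) ∂ν ≤ ENNReal.ofReal (H * τ) := by
      refine le_trans (lintegral_mono fun x => ?_) hz
      have h1 : f x ≤ dist z x := le_trans (min_le_left _ _) (by rw [dist_comm])
      have : ENNReal.ofReal (f x ^ 2) ≤ ENNReal.ofReal (dist z x ^ 2) :=
        ENNReal.ofReal_le_ofReal (by
          exact pow_le_pow_left₀ (hf0 x) h1 2)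
      calc ENNReal.ofReal (f x ^ 2) ≤ ENNReal.ofReal (dist z x ^ 2) := this
        _ = ENNReal.ofReal (dist z x) ^ 2 := by
            rw [← ENNReal.ofReal_pow dist_nonneg]
        _ = edist z x ^ 2 := by rw [edist_dist]
    rw [integral_eq_lintegral_of_nonneg_ae
      (Filter.Eventually.of_forall fun x => sq_nonneg _) (hfcont.pow 2).aestronglyMeasurable]
    exact le_trans (ENNReal.toReal_mono ENNReal.ofReal_ne_top key)
      (by rw [ENNReal.toReal_ofReal (by positivity)])
  -- m² ≤ ∫ f²  (since ∫ (f - m)² ≥ 0)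
  have hmsq : m ^ 2 ≤ ∫ x, f x ^ 2 ∂ν := by
    have h1 : (0:ℝ) ≤ ∫ x, (f x - m) ^ 2 ∂ν := integral_nonneg fun x => sq_nonneg _
    have hexp : ∀ x, (f x - m) ^ 2 = f x ^ 2 - (2 * m * f x - m ^ 2) := by intro x; ring
    have hint2 : Integrable (fun x => 2 * m * f x - m ^ 2) ν :=
      ((hfint.const_mul (2 * m)).sub (integrable_const (m ^ 2)))
    have h2 : ∫ x, (f x - m) ^ 2 ∂ν = (∫ x, f x ^ 2 ∂ν) - (2 * m * m - m ^ 2) := by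
      simp_rw [hexp]
      rw [integral_sub hf2int hint2, integral_sub (hfint.const_mul (2 * m)) (integrable_const _),
        integral_const_mul, integral_const, probReal_univ]
      simp [← hmdef]
    nlinarith [h1, h2]
  have hm_le : m ≤ Real.sqrt (H * τ) :=
    (Real.le_sqrt hm0 (by positivity)).2 (le_trans hmsq hf2)
  -- the centered function
  set h : X → ℝ := fun x => f x - m with hhdef
  have hhL : LipschitzWith 1 h := by
    intro x y
    have := hfL x y
    simpa [h, edist_dist, Real.dist_eq] using this
  have hhbd : ∃ M : ℝ, ∀ x, |h x| ≤ M := by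
    refine ⟨C + m, fun x => ?_⟩
    have h1 := hf0 x
    have h2 := hfC x
    simp only [hhdef]
    rw [abs_le]
    constructor <;> linarith
  have hhint : (∫ x, h x ∂ν) = 0 := by
    simp only [h]
    rw [integral_sub hfint (integrable_const m), integral_const, probReal_univ]
    simp [← hmdef]
  set l : ℝ := r / (2 * τ) with hldef
  have hl0 : 0 < l := by positivity
  have hmgf := hGauss h hhL hhbd hhint l hl0
  -- the set
  set A : Set X := {x | Real.sqrt (H * τ) + r ≤ dist x z} with hAdef
  have hAmeas : MeasurableSet A :=
    (isClosed_le continuous_const (continuous_id.dist continuous_const)).measurableSet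
  have hhA : ∀ x ∈ A, r ≤ h x := by
    intro x hx
    have hfx : f x = C := min_eq_right hx
    simp only [h, hfx]
    linarith
  -- integrability of exp(l * h)
  have hexpint : Integrable (fun x => Real.exp (l * h x)) ν := by
    refine (integrable_const (Real.exp (l * (C + m)))).mono'
      ((Real.continuous_exp.comp ((continuous_const.mul (hfcont.sub continuous_const)))).aestronglyMeasurable) ?_
    refine Filter.Eventually.of_forall fun x => ?_
    rw [Real.norm_eq_abs, abs_of_pos (Real.exp_pos _), Real.exp_le_exp]
    have hb : h x ≤ C + m := by
      have h2 := hfC x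
      simp only [hhdef]
      linarith
    exact mul_le_mul_of_nonneg_left hb hl0.le
  -- Chernoff
  have hchern : (ν A).toReal * Real.exp (l * r) ≤ Real.exp (τ * l ^ 2) := by
    have h1 : ∫ x in A, Real.exp (l * r) ∂ν ≤ ∫ x in A, Real.exp (l * h x) ∂ν := by
      refine setIntegral_mono_on (integrableOn_const (measure_ne_top ν A))
        (hexpint.integrableOn) hAmeas fun x hx => ?_
      exact Real.exp_le_exp.2 (mul_le_mul_of_nonneg_left (hhA x hx) hl0.le)
    have h2 : ∫ x in A, Real.exp (l * h x) ∂ν ≤ ∫ x, Real.exp (l * h x) ∂ν :=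
      setIntegral_le_integral hexpint (Filter.Eventually.of_forall fun x => (Real.exp_pos _).le)
    have h3 : ∫ x in A, Real.exp (l * r) ∂ν = (ν A).toReal * Real.exp (l * r) := by
      rw [setIntegral_const]; simp [smul_eq_mul]; rfl
    linarith [hmgf]
  have hfinal : (ν A).toReal ≤ Real.exp (-(r ^ 2) / (4 * τ)) := by
    have hexp_eq : Real.exp (τ * l ^ 2) / Real.exp (l * r) = Real.exp (-(r ^ 2) / (4 * τ)) := by
      rw [← Real.exp_sub]
      congr 1
      field_simp [hldef]
      rw [hldef]
      field_simp
      ring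
    rw [← hexp_eq, le_div_iff₀ (Real.exp_pos _)]
    exact hchern
  rw [← ENNReal.ofReal_toReal (measure_ne_top ν A)]
  exact ENNReal.ofReal_le_ofReal hfinal
end

section
/- For every H > 0 and every ε > 0 there exists a constant C = C(H, ε) > 0 with the following property: whenever (X, d) is a metric space, τ > 0, ν is a Borel probability measure on X satisfying the Gaussian moment-generating bound at scale τ, and z ∈ X satisfies ∫_X d(z, x)² dν(x) ≤ Hτ, then for every L > 0 one has ν({x ∈ X : d(x, z) ≥ L}) ≤ C · exp(−L²/((4+ε)τ)). -/
open MeasureTheory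
open scoped ENNReal

universe u

/-- For every `H > 0` and `ε > 0` there is a constant `C = C(H, ε) > 0` such that:
for any metric space `X`, any `τ > 0`, any Borel probability measure `ν` on `X`
satisfying the Gaussian moment-generating bound at scale `τ`, and any `z ∈ X` with
`∫ d(z,·)² dν ≤ Hτ`, one has `ν({d(·,z) ≥ L}) ≤ C·exp(−L²/((4+ε)τ))` for every `L > 0`. -/
theorem stmt4 (H ε : ℝ) (hH : 0 < H) (hε : 0 < ε) :
    ∃ C : ℝ, 0 < C ∧
      ∀ (X : Type u) [MetricSpace X] [MeasurableSpace X] [BorelSpace X]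
        (τ : ℝ), 0 < τ → ∀ ν : Measure X, IsProbabilityMeasure ν →
        (∀ h : X → ℝ, LipschitzWith 1 h → (∃ M : ℝ, ∀ x, |h x| ≤ M) →
          (∫ x, h x ∂ν) = 0 → ∀ l : ℝ, 0 < l →
            ∫ x, Real.exp (l * h x) ∂ν ≤ Real.exp (τ * l ^ 2)) →
        ∀ z : X, (∫⁻ x, edist z x ^ 2 ∂ν ≤ ENNReal.ofReal (H * τ)) →
        ∀ L : ℝ, 0 < L →
          ν {x | L ≤ dist x z} ≤
            ENNReal.ofReal (C * Real.exp (-(L ^ 2) / ((4 + ε) * τ))) := by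
  refine ⟨Real.exp (H / ε), Real.exp_pos _, ?_⟩
  intro X _ _ _ τ hτ ν hν hmgf z hz L hL
  set f : X → ℝ := fun x => min (dist x z) L with hfdef
  have hf_lip : LipschitzWith 1 f := (LipschitzWith.dist_left z).min_const L
  have hf_cont : Continuous f := hf_lip.continuous
  have hf0 : ∀ x, 0 ≤ f x := fun x => le_min dist_nonneg hL.le
  have hfL : ∀ x, f x ≤ L := fun x => min_le_right _ _
  have hf_int : Integrable f ν := by
    refine (integrable_const L).mono' hf_cont.aestronglyMeasurable ?_
    filter_upwards with x
    rw [Real.norm_eq_abs, abs_of_nonneg (hf0 x)]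
    exact hfL x
  set m : ℝ := ∫ x, f x ∂ν with hmdef
  have hm0 : 0 ≤ m := integral_nonneg hf0
  -- ∫ f² ≤ Hτ
  have hf2_int : Integrable (fun x => (f x) ^ 2) ν := by
    refine (integrable_const (L ^ 2)).mono' ((hf_cont.pow 2).aestronglyMeasurable) ?_
    filter_upwards with x
    rw [Real.norm_eq_abs, abs_of_nonneg (sq_nonneg _)]
    exact pow_le_pow_left₀ (hf0 x) (hfL x) 2
  have hint_sq : ∫ x, (f x) ^ 2 ∂ν ≤ H * τ := by
    have h1 : ∫ x, (f x) ^ 2 ∂ν = (∫⁻ x, ENNReal.ofReal ((f x) ^ 2) ∂ν).toReal :=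
      integral_eq_lintegral_of_nonneg_ae (Filter.Eventually.of_forall fun x => sq_nonneg _)
        ((hf_cont.pow 2).aestronglyMeasurable)
    rw [h1]
    refine ENNReal.toReal_le_of_le_ofReal (by positivity) (le_trans (lintegral_mono fun x => ?_) hz)
    have : edist z x ^ 2 = ENNReal.ofReal (dist z x ^ 2) := by
      rw [edist_dist, ← ENNReal.ofReal_pow dist_nonneg]
    rw [this]
    apply ENNReal.ofReal_le_ofReal
    have : f x ≤ dist z x := by rw [dist_comm]; exact min_le_left _ _
    exact pow_le_pow_left₀ (hf0 x) this 2
  -- m² ≤ ∫ f² (Jensen via variance)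
  have hm2 : m ^ 2 ≤ H * τ := by
    have hvar : 0 ≤ ∫ x, (f x - m) ^ 2 ∂ν := integral_nonneg fun x => sq_nonneg _
    have e1 : (fun x => (f x - m) ^ 2) = fun x => ((f x) ^ 2 - (2 * m) * f x) + m ^ 2 := by
      funext x; ring
    have h2 : ∫ x, (f x - m) ^ 2 ∂ν = (∫ x, (f x) ^ 2 ∂ν) - (2 * m) * m + m ^ 2 := by
      have i1 : Integrable (fun x => (f x) ^ 2 - (2 * m) * f x) ν :=
        hf2_int.sub (hf_int.const_mul _)
      rw [e1, integral_add i1 (integrable_const _),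
        integral_sub hf2_int (hf_int.const_mul _), integral_const_mul, integral_const,
        probReal_univ]
      simp [← hmdef]
    nlinarith [hint_sq, hvar, h2]
  have hpos : (0:ℝ) < (4 + ε) * τ := by positivity
  rcases le_or_gt L m with hLm | hmL
  · -- trivial case: L ≤ m
    have hL2 : L ^ 2 ≤ H * τ := le_trans (pow_le_pow_left₀ hL.le hLm 2) hm2
    calc ν {x | L ≤ dist x z} ≤ 1 := prob_le_one
      _ ≤ ENNReal.ofReal (Real.exp (H / ε) * Real.exp (-(L ^ 2) / ((4 + ε) * τ))) := by
          rw [ENNReal.one_le_ofReal, ← Real.exp_add]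
          rw [show (1:ℝ) = Real.exp 0 by simp, Real.exp_le_exp]
          have h1 : L ^ 2 / ((4 + ε) * τ) ≤ H / ε := by
            rw [div_le_div_iff₀ hpos hε]
            nlinarith [mul_le_mul_of_nonneg_right hL2 hε.le, hτ.le]
          have h2 : -(L ^ 2) / ((4 + ε) * τ) = -(L ^ 2 / ((4 + ε) * τ)) := by ring
          rw [h2]; linarith
  · -- main case: m < L
    set a : ℝ := L - m with hadef
    have ha : 0 < a := by simp [hadef]; linarith
    set l : ℝ := a / (2 * τ) with hldef
    have hl : 0 < l := by positivity
    set h : X → ℝ := fun x => f x - m with hhdef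
    have hh_lip : LipschitzWith 1 h := by
      refine LipschitzWith.of_dist_le_mul fun x y => ?_
      simp only [hhdef, dist_sub_right]
      simpa using hf_lip.dist_le_mul x y
    have hh_bdd : ∃ M : ℝ, ∀ x, |h x| ≤ M := by
      refine ⟨L + m, fun x => abs_le.mpr ⟨?_, ?_⟩⟩
      · have := hf0 x; simp only [hhdef]; linarith
      · have := hfL x; simp only [hhdef]; linarith
    have hh_mean : (∫ x, h x ∂ν) = 0 := by
      simp only [hhdef]
      rw [integral_sub hf_int (integrable_const m), integral_const, probReal_univ]
      simp [← hmdef]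
    have hmgf_h := hmgf h hh_lip hh_bdd hh_mean l hl
    have hexp_int : Integrable (fun x => Real.exp (l * h x)) ν := by
      refine (integrable_const (Real.exp (l * L))).mono'
        ((Real.continuous_exp.comp ((continuous_const.mul (hf_cont.sub continuous_const)))).aestronglyMeasurable) ?_
      filter_upwards with x
      rw [Real.norm_eq_abs, abs_of_nonneg (Real.exp_pos _).le, Real.exp_le_exp]
      have h1 : h x ≤ L := by have := hfL x; simp only [hhdef]; linarith
      exact mul_le_mul_of_nonneg_left h1 hl.le
    have hcher := ProbabilityTheory.measure_ge_le_exp_mul_mgf (X := h) (μ := ν) a hl.le hexp_int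
    have hmgf_le : ProbabilityTheory.mgf h ν l ≤ Real.exp (τ * l ^ 2) := hmgf_h
    have hsub : {x | L ≤ dist x z} ⊆ {x | a ≤ h x} := by
      intro x hx
      simp only [Set.mem_setOf_eq] at hx ⊢
      have : f x = L := min_eq_right hx
      simp only [hhdef, this, hadef, le_refl]
    have hkey : ((ν {x | a ≤ h x}).toReal : ℝ) ≤
        Real.exp (H / ε) * Real.exp (-(L ^ 2) / ((4 + ε) * τ)) := by
      refine le_trans hcher (le_trans (mul_le_mul_of_nonneg_left hmgf_le (Real.exp_pos _).le) ?_)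
      rw [← Real.exp_add, ← Real.exp_add, Real.exp_le_exp]
      have heq : -l * a + τ * l ^ 2 = -(a ^ 2 / (4 * τ)) := by
        rw [hldef]; field_simp; ring
      have h1 : L ^ 2 / ((4 + ε) * τ) ≤ H / ε + a ^ 2 / (4 * τ) := by
        have h2 : H / ε + a ^ 2 / (4 * τ) = (4 * H * τ + ε * a ^ 2) / (4 * ε * τ) := by
          field_simp
        rw [h2, div_le_div_iff₀ hpos (by positivity)]
        have haL : L = a + m := by simp [hadef]
        rw [haL]
        nlinarith [mul_nonneg hτ.le (sq_nonneg (ε * a - 4 * m)),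
          mul_nonneg hτ.le (sub_nonneg.mpr hm2),
          mul_nonneg (mul_nonneg hε.le hτ.le) (sub_nonneg.mpr hm2), hτ.le, hε.le, haL]
      have h3 : -(L ^ 2) / ((4 + ε) * τ) = -(L ^ 2 / ((4 + ε) * τ)) := by ring
      rw [heq, h3]; linarith
    calc ν {x | L ≤ dist x z} ≤ ν {x | a ≤ h x} := measure_mono hsub
      _ ≤ ENNReal.ofReal (Real.exp (H / ε) * Real.exp (-(L ^ 2) / ((4 + ε) * τ))) := by
          rw [ENNReal.le_ofReal_iff_toReal_le (measure_ne_top ν _) (by positivity)]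
          exact hkey
end

section
/- Under hypotheses (W1)–(W4), for every ε ∈ (0, ε₀] the spacetime distances d* and d^{*,ε} are equivalent: d*(x, y) ≤ d^{*,ε}(x, y) ≤ (ε₀/ε) · d*(x, y) for all x, y ∈ X. -/
/-- The hypotheses (W1)–(W4) (together with nonnegativity and the range condition on the
time function `𝔱 : X → [a, 0]`) for an assignment `W` of "Wasserstein distances between
conjugate heat kernel measures": `W x y t` is defined (i.e. the axioms are imposed) for
`t ∈ [a, min (𝔱 x) (𝔱 y)]`. -/
structure WAxioms {X : Type*} (a : ℝ) (𝔱 : X → ℝ) (W : X → X → ℝ → ℝ) : Prop where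
  time_mem : ∀ x, 𝔱 x ∈ Set.Icc a 0
  nonneg : ∀ x y, ∀ t ∈ Set.Icc a (min (𝔱 x) (𝔱 y)), 0 ≤ W x y t
  symm : ∀ x y, ∀ t ∈ Set.Icc a (min (𝔱 x) (𝔱 y)), W x y t = W y x t
  self : ∀ x, ∀ t ∈ Set.Icc a (𝔱 x), W x x t = 0
  triangle : ∀ x y z, ∀ t ∈ Set.Icc a (min (𝔱 x) (min (𝔱 y) (𝔱 z))),
      W x z t ≤ W x y t + W y z t
  mono : ∀ x y, MonotoneOn (W x y) (Set.Icc a (min (𝔱 x) (𝔱 y)))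
  cont : ∀ x y, ContinuousOn (W x y) (Set.Icc a (min (𝔱 x) (𝔱 y)))

/-- The defining set of radii for the spacetime distance between `x` and `y`:
with `t = max(𝔱 x, 𝔱 y)` and `s = min(𝔱 x, 𝔱 y)`, the set of
`r ∈ [√(t−s), √(t−a))` with `W x y (t − r²) ≤ ε r`. -/
def dstarSet {X : Type*} (a ε : ℝ) (𝔱 : X → ℝ) (W : X → X → ℝ → ℝ) (x y : X) : Set ℝ :=
  { r : ℝ | Real.sqrt (max (𝔱 x) (𝔱 y) - min (𝔱 x) (𝔱 y)) ≤ r ∧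
      r < Real.sqrt (max (𝔱 x) (𝔱 y) - a) ∧
      W x y (max (𝔱 x) (𝔱 y) - r ^ 2) ≤ ε * r }

open Classical in
/-- The spacetime distance `d*` associated to `W` (with parameter `ε`): the infimum of the
set `dstarSet` if it is nonempty, and `ε⁻¹ W(x, y; a)` otherwise. -/
noncomputable def dstar {X : Type*} (a ε : ℝ) (𝔱 : X → ℝ) (W : X → X → ℝ → ℝ) (x y : X) : ℝ :=
  if (dstarSet a ε 𝔱 W x y).Nonempty then sInf (dstarSet a ε 𝔱 W x y)
  else ε⁻¹ * W x y a

/-- Under hypotheses (W1)–(W4), for every `ε ∈ (0, ε₀]` the spacetime distances `d*` (with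
parameter `ε₀`) and `d^{*,ε}` (with parameter `ε`) are equivalent:
`d* ≤ d^{*,ε} ≤ (ε₀/ε)·d*`. -/
theorem stmt11 {X : Type*} (a ε₀ : ℝ) (ha : a < 0) (hε₀ : ε₀ ∈ Set.Ioc (0 : ℝ) 1)
    (𝔱 : X → ℝ) (W : X → X → ℝ → ℝ) (hW : WAxioms a 𝔱 W)
    (ε : ℝ) (hε : ε ∈ Set.Ioc (0 : ℝ) ε₀) :
    ∀ x y : X,
      dstar a ε₀ 𝔱 W x y ≤ dstar a ε 𝔱 W x y ∧
      dstar a ε 𝔱 W x y ≤ (ε₀ / ε) * dstar a ε₀ 𝔱 W x y := by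
  obtain ⟨hε0p, hε01⟩ := hε₀
  obtain ⟨hεp, hεle⟩ := hε
  intro x y
  have has : a ≤ min (𝔱 x) (𝔱 y) := le_min (hW.time_mem x).1 (hW.time_mem y).1
  have hst : min (𝔱 x) (𝔱 y) ≤ max (𝔱 x) (𝔱 y) := min_le_max
  have hWa0 : 0 ≤ W x y a := hW.nonneg x y a ⟨le_refl a, has⟩
  have hfacts : ∀ ε' : ℝ, ∀ r ∈ dstarSet a ε' 𝔱 W x y,
      0 ≤ r ∧ a ≤ max (𝔱 x) (𝔱 y) - r ^ 2 ∧ max (𝔱 x) (𝔱 y) - r ^ 2 ≤ min (𝔱 x) (𝔱 y) := by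
    rintro ε' r ⟨h1, h2, h3⟩
    have hr0 : 0 ≤ r := (Real.sqrt_nonneg _).trans h1
    have hta : (0:ℝ) ≤ max (𝔱 x) (𝔱 y) - a := by linarith
    have hts : (0:ℝ) ≤ max (𝔱 x) (𝔱 y) - min (𝔱 x) (𝔱 y) := by linarith
    have e1 : r ^ 2 < max (𝔱 x) (𝔱 y) - a := by
      nlinarith [Real.sq_sqrt hta, Real.sqrt_nonneg (max (𝔱 x) (𝔱 y) - a)]
    have e2 : max (𝔱 x) (𝔱 y) - min (𝔱 x) (𝔱 y) ≤ r ^ 2 := by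
      nlinarith [Real.sq_sqrt hts, Real.sqrt_nonneg (max (𝔱 x) (𝔱 y) - min (𝔱 x) (𝔱 y))]
    exact ⟨hr0, by linarith, by linarith⟩
  have hbdd : ∀ ε' : ℝ, BddBelow (dstarSet a ε' 𝔱 W x y) :=
    fun ε' => ⟨0, fun r hr => (Real.sqrt_nonneg _).trans hr.1⟩
  have hsub : dstarSet a ε 𝔱 W x y ⊆ dstarSet a ε₀ 𝔱 W x y := by
    rintro r ⟨h1, h2, h3⟩
    exact ⟨h1, h2, h3.trans (mul_le_mul_of_nonneg_right hεle ((Real.sqrt_nonneg _).trans h1))⟩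
  have hlb : ∀ r ∈ dstarSet a ε₀ 𝔱 W x y, ε₀⁻¹ * W x y a ≤ r := by
    intro r hr
    obtain ⟨hr0, hra, hrs⟩ := hfacts ε₀ r hr
    have hm : W x y a ≤ W x y (max (𝔱 x) (𝔱 y) - r ^ 2) :=
      hW.mono x y ⟨le_refl a, has⟩ ⟨hra, hrs⟩ hra
    have h4 : W x y a ≤ ε₀ * r := hm.trans hr.2.2
    have h5 := mul_le_mul_of_nonneg_left h4 (inv_nonneg.2 hε0p.le)
    rwa [← mul_assoc, inv_mul_cancel₀ hε0p.ne', one_mul] at h5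
  have hcont : ¬ (dstarSet a ε 𝔱 W x y).Nonempty → a < min (𝔱 x) (𝔱 y) →
      ε * Real.sqrt (max (𝔱 x) (𝔱 y) - a) ≤ W x y a := by
    intro hemp has'
    have key : ∀ u ∈ Set.Ioc a (min (𝔱 x) (𝔱 y)),
        ε * Real.sqrt (max (𝔱 x) (𝔱 y) - u) ≤ W x y u := by
      intro u hu
      by_contra hlt
      push_neg at hlt
      apply hemp
      have hu2 : (0:ℝ) ≤ max (𝔱 x) (𝔱 y) - u := by linarith [hu.2]
      refine ⟨Real.sqrt (max (𝔱 x) (𝔱 y) - u), Real.sqrt_le_sqrt (by linarith [hu.2]),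
        Real.sqrt_lt_sqrt hu2 (by linarith [hu.1]), ?_⟩
      rw [Real.sq_sqrt hu2]
      have he : max (𝔱 x) (𝔱 y) - (max (𝔱 x) (𝔱 y) - u) = u := by ring
      rw [he]
      exact hlt.le
    have hne : (nhdsWithin a (Set.Ioc a (min (𝔱 x) (𝔱 y)))).NeBot := by
      rw [nhdsWithin_Ioc_eq_nhdsGT has']
      infer_instance
    have h1 : Filter.Tendsto (fun u => W x y u)
        (nhdsWithin a (Set.Ioc a (min (𝔱 x) (𝔱 y)))) (nhds (W x y a)) :=
      Filter.Tendsto.mono_left (hW.cont x y a ⟨le_refl a, has⟩)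
        (nhdsWithin_mono a Set.Ioc_subset_Icc_self)
    have h2 : Filter.Tendsto (fun u => ε * Real.sqrt (max (𝔱 x) (𝔱 y) - u))
        (nhdsWithin a (Set.Ioc a (min (𝔱 x) (𝔱 y))))
        (nhds (ε * Real.sqrt (max (𝔱 x) (𝔱 y) - a))) :=
      Filter.Tendsto.mono_left
        ((continuous_const.mul (Real.continuous_sqrt.comp
          (continuous_const.sub continuous_id))).tendsto a) nhdsWithin_le_nhds
    exact le_of_tendsto_of_tendsto h2 h1 (eventually_mem_nhdsWithin.mono key)
  by_cases hE : (dstarSet a ε 𝔱 W x y).Nonempty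
  · have hE0 : (dstarSet a ε₀ 𝔱 W x y).Nonempty := hE.mono hsub
    unfold dstar
    rw [if_pos hE, if_pos hE0]
    constructor
    · exact csInf_le_csInf (hbdd ε₀) hE hsub
    · have key : ∀ r ∈ dstarSet a ε₀ 𝔱 W x y,
          sInf (dstarSet a ε 𝔱 W x y) ≤ (ε₀/ε) * r := by
        intro r hr
        obtain ⟨hr0, hra, hrs⟩ := hfacts ε₀ r hr
        by_cases hlt : (ε₀/ε) * r < Real.sqrt (max (𝔱 x) (𝔱 y) - a)
        · apply csInf_le (hbdd ε)
          have hlam : 1 ≤ ε₀ / ε := (one_le_div hεp).2 hεle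
          have hlam0 : 0 ≤ ε₀ / ε := by positivity
          have hrr : r ≤ ε₀/ε * r := le_mul_of_one_le_left hr0 hlam
          refine ⟨hr.1.trans hrr, hlt, ?_⟩
          have hsq : (ε₀/ε * r)^2 < max (𝔱 x) (𝔱 y) - a := by
            nlinarith [Real.sq_sqrt (show (0:ℝ) ≤ max (𝔱 x) (𝔱 y) - a by linarith),
              Real.sqrt_nonneg (max (𝔱 x) (𝔱 y) - a), mul_nonneg hlam0 hr0]
          have hmono : W x y (max (𝔱 x) (𝔱 y) - (ε₀/ε*r)^2)
              ≤ W x y (max (𝔱 x) (𝔱 y) - r^2) :=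
            hW.mono x y ⟨by linarith, by nlinarith⟩ ⟨hra, hrs⟩ (by nlinarith)
          calc W x y (max (𝔱 x) (𝔱 y) - (ε₀/ε*r)^2)
              ≤ W x y (max (𝔱 x) (𝔱 y) - r^2) := hmono
            _ ≤ ε₀ * r := hr.2.2
            _ = ε * (ε₀/ε * r) := by field_simp
        · obtain ⟨r', hr'⟩ := hE
          push_neg at hlt
          exact (csInf_le (hbdd ε) hr').trans (hr'.2.1.le.trans hlt)
      have h2 : ε/ε₀ * sInf (dstarSet a ε 𝔱 W x y) ≤ sInf (dstarSet a ε₀ 𝔱 W x y) := by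
        apply le_csInf hE0
        intro r hr
        have h3 := mul_le_mul_of_nonneg_left (key r hr) (div_pos hεp hε0p).le
        have h4 : ε/ε₀ * (ε₀/ε * r) = r := by field_simp
        rwa [h4] at h3
      have h5 := mul_le_mul_of_nonneg_left h2 (div_pos hε0p hεp).le
      have h6 : ε₀/ε * (ε/ε₀ * sInf (dstarSet a ε 𝔱 W x y)) = sInf (dstarSet a ε 𝔱 W x y) := by
        field_simp
      rwa [h6] at h5
  · by_cases hE0 : (dstarSet a ε₀ 𝔱 W x y).Nonempty
    · unfold dstar
      rw [if_neg hE, if_pos hE0]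
      obtain ⟨r₀, h1, h2, h3⟩ := hE0
      have has' : a < min (𝔱 x) (𝔱 y) := by
        by_contra h
        push_neg at h
        have he : min (𝔱 x) (𝔱 y) = a := le_antisymm h has
        rw [he] at h1
        exact absurd (h1.trans_lt h2) (lt_irrefl _)
      have hca := hcont hE has'
      constructor
      · have hub : Real.sqrt (max (𝔱 x) (𝔱 y) - a) ≤ ε⁻¹ * W x y a := by
          have h5 := mul_le_mul_of_nonneg_left hca (inv_nonneg.2 hεp.le)
          rwa [← mul_assoc, inv_mul_cancel₀ hεp.ne', one_mul] at h5
        exact (csInf_le (hbdd ε₀) ⟨h1, h2, h3⟩).trans (h2.le.trans hub)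
      · have hM : ε₀⁻¹ * W x y a ≤ sInf (dstarSet a ε₀ 𝔱 W x y) :=
          le_csInf ⟨r₀, h1, h2, h3⟩ hlb
        have h5 := mul_le_mul_of_nonneg_left hM (div_pos hε0p hεp).le
        have h6 : ε₀/ε * (ε₀⁻¹ * W x y a) = ε⁻¹ * W x y a := by
          field_simp
        rwa [h6] at h5
    · unfold dstar
      rw [if_neg hE, if_neg hE0]
      constructor
      · exact mul_le_mul_of_nonneg_right (inv_anti₀ hεp hεle) hWa0
      · have h6 : ε₀/ε * (ε₀⁻¹ * W x y a) = ε⁻¹ * W x y a := by field_simp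
        rw [h6]
end

section
/- Let J ⊆ ℝ be an interval, M a compact metrizable topological space, (d_t)_{t∈J} a family of metrics on M each inducing the topology of M and depending continuously on t in the bi-Lipschitz sense, and μ, ν : J → (Borel probability measures on M) weakly continuous. Define F(t) := sup{ ∫ f dμ_t − ∫ f dν_t : f : M → ℝ with |f(x) − f(y)| ≤ d_t(x, y) for all x, y ∈ M }. If F is nondecreasing on J, then F is continuous on J. -/
open MeasureTheory Filter

/-- Let `J ⊆ ℝ` be an interval, `M` a compact metrizable space, `(d t)_{t ∈ J}` a family of
metrics on `M`, each inducing the topology of `M` and depending continuously on `t` in the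
bi-Lipschitz sense, and `μ, ν` weakly continuous families of Borel probability measures on `M`.
If the `W₁`-distance `F t = sup { ∫ f dμ_t − ∫ f dν_t : f is 1-Lipschitz for d t }` is
nondecreasing on `J`, then it is continuous on `J`. -/
theorem stmt13 {M : Type*} [TopologicalSpace M] [CompactSpace M] [TopologicalSpace.MetrizableSpace M]
    [MeasurableSpace M] [BorelSpace M]
    (J : Set ℝ) (hJ : J.OrdConnected)
    (d : ℝ → M → M → ℝ)
    (hsymm : ∀ t ∈ J, ∀ x y : M, d t x y = d t y x)
    (hself : ∀ t ∈ J, ∀ x : M, d t x x = 0)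
    (hpos : ∀ t ∈ J, ∀ x y : M, d t x y = 0 → x = y)
    (htri : ∀ t ∈ J, ∀ x y z : M, d t x z ≤ d t x y + d t y z)
    (htop : ∀ t ∈ J, ∀ s : Set M,
      IsOpen s ↔ ∀ x ∈ s, ∃ ε > 0, ∀ y : M, d t x y < ε → y ∈ s)
    (hbilip : ∀ t₀ ∈ J, ∀ ε > (0 : ℝ), ∃ δ > (0 : ℝ), ∀ t ∈ J, |t - t₀| < δ →
      ∀ x y : M, (1 + ε)⁻¹ * d t₀ x y ≤ d t x y ∧ d t x y ≤ (1 + ε) * d t₀ x y)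
    (μ ν : ℝ → Measure M)
    (hμp : ∀ t ∈ J, IsProbabilityMeasure (μ t))
    (hνp : ∀ t ∈ J, IsProbabilityMeasure (ν t))
    (hμc : ∀ f : M → ℝ, Continuous f → ContinuousOn (fun t => ∫ x, f x ∂(μ t)) J)
    (hνc : ∀ f : M → ℝ, Continuous f → ContinuousOn (fun t => ∫ x, f x ∂(ν t)) J)
    (F : ℝ → ℝ)
    (hF : ∀ t ∈ J, F t = sSup { c : ℝ | ∃ f : M → ℝ,
        (∀ x y : M, |f x - f y| ≤ d t x y) ∧ c = (∫ x, f x ∂(μ t)) - ∫ x, f x ∂(ν t) })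
    (hmono : MonotoneOn F J) :
    ContinuousOn F J := by
  intro t₀ ht₀
  haveI hne : Nonempty M := by
    by_contra h
    rw [not_nonempty_iff] at h
    have h1 := (hμp t₀ ht₀).measure_univ
    rw [Set.univ_eq_empty_iff.2 h, measure_empty] at h1
    exact zero_ne_one h1
  have x₀ : M := Nonempty.some hne
  -- nonnegativity of the metrics
  have dnn : ∀ t ∈ J, ∀ x y : M, 0 ≤ d t x y := by
    intro t ht x y
    have h1 := htri t ht x y x
    have h2 := hself t ht x
    have h3 := hsymm t ht y x
    linarith
  -- balls are open
  have hball : ∀ t ∈ J, ∀ (x : M) (ε : ℝ), IsOpen {y | d t x y < ε} := by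
    intro t ht x ε
    rw [htop t ht]
    intro y hy
    refine ⟨ε - d t x y, by simpa using hy, fun z hz => ?_⟩
    have := htri t ht x y z
    simp only [Set.mem_setOf_eq] at *
    linarith
  -- 1-Lipschitz functions are continuous
  have hcont : ∀ t ∈ J, ∀ f : M → ℝ, (∀ x y, |f x - f y| ≤ d t x y) → Continuous f := by
    intro t ht f hf
    rw [continuous_iff_continuousAt]
    intro x
    show Tendsto f (nhds x) (nhds (f x))
    rw [Metric.tendsto_nhds]
    intro ε hε
    have hmem : {y | d t x y < ε} ∈ nhds x :=
      (hball t ht x ε).mem_nhds (by simp [hself t ht x, hε])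
    filter_upwards [hmem] with y hy
    rw [Real.dist_eq]
    calc |f y - f x| ≤ d t y x := hf y x
    _ = d t x y := hsymm t ht y x
    _ < ε := hy
  -- integrability
  have hInt : ∀ (f : M → ℝ), Continuous f → ∀ (m : Measure M), IsFiniteMeasure m →
      Integrable f m := by
    intro f hf m hm
    exact hf.integrable_of_hasCompactSupport (HasCompactSupport.of_compactSpace f)
  -- shift invariance
  have hshift : ∀ t ∈ J, ∀ f : M → ℝ, Continuous f → ∀ c : ℝ,
      ((∫ x, (f x - c) ∂(μ t)) - ∫ x, (f x - c) ∂(ν t))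
        = (∫ x, f x ∂(μ t)) - ∫ x, f x ∂(ν t) := by
    intro t ht f hf c
    haveI := hμp t ht
    haveI := hνp t ht
    rw [integral_sub (hInt f hf _ inferInstance) (integrable_const c),
        integral_sub (hInt f hf _ inferInstance) (integrable_const c),
        integral_const, integral_const, probReal_univ, probReal_univ]
    simp
  -- bound on integral differences
  have habs : ∀ t ∈ J, ∀ g : M → ℝ, Continuous g → ∀ C : ℝ, (∀ x, |g x| ≤ C) →
      |(∫ x, g x ∂(μ t)) - ∫ x, g x ∂(ν t)| ≤ 2 * C := by
    intro t ht g hg C hC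
    haveI := hμp t ht
    haveI := hνp t ht
    have h1 : ‖∫ x, g x ∂(μ t)‖ ≤ C * ((μ t) Set.univ).toReal :=
      norm_integral_le_of_norm_le_const (Eventually.of_forall fun x => by
        simpa [Real.norm_eq_abs] using hC x)
    have h2 : ‖∫ x, g x ∂(ν t)‖ ≤ C * ((ν t) Set.univ).toReal :=
      norm_integral_le_of_norm_le_const (Eventually.of_forall fun x => by
        simpa [Real.norm_eq_abs] using hC x)
    rw [measure_univ] at h1 h2
    simp only [ENNReal.toReal_one, mul_one, Real.norm_eq_abs] at h1 h2
    have h3 := abs_le.1 h1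
    have h4 := abs_le.1 h2
    rw [abs_le]
    constructor <;> linarith [h3.1, h3.2, h4.1, h4.2]
  -- a uniform bound on the metric at a given time
  have hCex : ∀ t ∈ J, ∃ C : ℝ, 0 ≤ C ∧ ∀ x, d t x x₀ ≤ C := by
    intro t ht
    have hdl : ∀ x y : M, |d t x x₀ - d t y x₀| ≤ d t x y := by
      intro x y
      rw [abs_sub_le_iff]
      have h1 := htri t ht x y x₀
      have h2 := htri t ht y x x₀
      have h3 := hsymm t ht y x
      constructor <;> linarith
    have hdc : Continuous fun x => d t x x₀ := hcont t ht _ hdl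
    obtain ⟨z, -, hz⟩ := isCompact_univ.exists_isMaxOn (Set.univ_nonempty) hdc.continuousOn
    exact ⟨d t z x₀, dnn t ht z x₀, fun x => hz (Set.mem_univ x)⟩
  -- sSup facts
  have hbddS : ∀ t ∈ J, BddAbove { c : ℝ | ∃ f : M → ℝ,
      (∀ x y : M, |f x - f y| ≤ d t x y) ∧ c = (∫ x, f x ∂(μ t)) - ∫ x, f x ∂(ν t) } := by
    intro t ht
    obtain ⟨C, hC0, hC⟩ := hCex t ht
    refine ⟨2 * C, ?_⟩
    rintro c ⟨f, hfl, rfl⟩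
    have hfc : Continuous f := hcont t ht f hfl
    have hb : ∀ x, |f x - f x₀| ≤ C := fun x => (hfl x x₀).trans (hC x)
    have := habs t ht (fun x => f x - f x₀) (hfc.sub continuous_const) C hb
    rw [hshift t ht f hfc (f x₀)] at this
    have := (abs_le.1 this).2
    linarith
  have h0S : ∀ t ∈ J, (0:ℝ) ∈ { c : ℝ | ∃ f : M → ℝ,
      (∀ x y : M, |f x - f y| ≤ d t x y) ∧ c = (∫ x, f x ∂(μ t)) - ∫ x, f x ∂(ν t) } := by
    intro t ht
    exact ⟨fun _ => 0, fun x y => by simpa using dnn t ht x y, by simp⟩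
  have hFle : ∀ t ∈ J, ∀ f : M → ℝ, (∀ x y, |f x - f y| ≤ d t x y) →
      (∫ x, f x ∂(μ t)) - ∫ x, f x ∂(ν t) ≤ F t := by
    intro t ht f hfl
    rw [hF t ht]
    exact le_csSup (hbddS t ht) ⟨f, hfl, rfl⟩
  have hFub : ∀ t ∈ J, ∀ B : ℝ, (∀ f : M → ℝ, (∀ x y, |f x - f y| ≤ d t x y) →
      (∫ x, f x ∂(μ t)) - ∫ x, f x ∂(ν t) ≤ B) → F t ≤ B := by
    intro t ht B hB
    rw [hF t ht]
    apply csSup_le ⟨0, h0S t ht⟩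
    rintro c ⟨f, hfl, rfl⟩
    exact hB f hfl
  have hF0 : ∀ t ∈ J, 0 ≤ F t := by
    intro t ht
    have := hFle t ht (fun _ => 0) (fun x y => by simpa using dnn t ht x y)
    simpa using this
  have hFlt : ∀ b : ℝ, b < F t₀ → ∃ f : M → ℝ, (∀ x y, |f x - f y| ≤ d t₀ x y) ∧
      b < (∫ x, f x ∂(μ t₀)) - ∫ x, f x ∂(ν t₀) := by
    intro b hb
    rw [hF t₀ ht₀] at hb
    obtain ⟨c, hc, hbc⟩ := exists_lt_of_lt_csSup ⟨0, h0S t₀ ht₀⟩ hb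
    obtain ⟨f, hfl, rfl⟩ := hc
    exact ⟨f, hfl, hbc⟩
  -- convergence of integral differences
  have hIt : ∀ f : M → ℝ, Continuous f →
      Tendsto (fun t => (∫ x, f x ∂(μ t)) - ∫ x, f x ∂(ν t)) (nhdsWithin t₀ J)
        (nhds ((∫ x, f x ∂(μ t₀)) - ∫ x, f x ∂(ν t₀))) := by
    intro f hf
    exact ((hμc f hf t₀ ht₀).sub (hνc f hf t₀ ht₀))
  show Tendsto F (nhdsWithin t₀ J) (nhds (F t₀))
  rw [Metric.tendsto_nhds]
  intro ε' hε'
  -- LOWER BOUND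
  have hlow : ∀ᶠ t in nhdsWithin t₀ J, F t₀ - ε' < F t := by
    obtain ⟨f, hfl, hfgt⟩ := hFlt (F t₀ - ε'/4) (by linarith)
    set ε := ε'/(4*(F t₀ + 1)) with hεdef
    have hF0' := hF0 t₀ ht₀
    have hεpos : 0 < ε := by
      apply div_pos hε'
      nlinarith
    have h1ε : (0:ℝ) < 1 + ε := by linarith
    obtain ⟨δ, hδ, hδb⟩ := hbilip t₀ ht₀ ε hεpos
    have hfc : Continuous f := hcont t₀ ht₀ f hfl
    have hev1 : ∀ᶠ t in nhdsWithin t₀ J,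
        F t₀ - ε'/2 < (∫ x, f x ∂(μ t)) - ∫ x, f x ∂(ν t) :=
      (hIt f hfc).eventually (eventually_gt_nhds (by linarith))
    have hev2 : ∀ᶠ t in nhdsWithin t₀ J, |t - t₀| < δ := by
      apply eventually_nhdsWithin_of_eventually_nhds
      filter_upwards [Metric.ball_mem_nhds t₀ hδ] with t ht
      simpa [Real.dist_eq] using ht
    filter_upwards [hev1, hev2, self_mem_nhdsWithin] with t h1 h2 htJ
    have hlip : ∀ x y, |(1+ε)⁻¹ * f x - (1+ε)⁻¹ * f y| ≤ d t x y := by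
      intro x y
      rw [← mul_sub, abs_mul, abs_of_pos (inv_pos.2 h1ε)]
      calc (1+ε)⁻¹ * |f x - f y| ≤ (1+ε)⁻¹ * d t₀ x y :=
            mul_le_mul_of_nonneg_left (hfl x y) (le_of_lt (inv_pos.2 h1ε))
      _ ≤ d t x y := (hδb t htJ h2 x y).1
    have hFt := hFle t htJ (fun x => (1+ε)⁻¹ * f x) hlip
    rw [integral_const_mul, integral_const_mul, ← mul_sub] at hFt
    set A := (∫ x, f x ∂(μ t)) - ∫ x, f x ∂(ν t) with hA
    have hεe : ε * (4*(F t₀+1)) = ε' := by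
      rw [hεdef]; field_simp
    have hstep : (1+ε) * (F t₀ - ε') < A := by nlinarith [mul_pos hεpos hε']
    have hkey : F t₀ - ε' < (1+ε)⁻¹ * A := by
      have h5 := mul_lt_mul_of_pos_left hstep (inv_pos.2 h1ε)
      rw [← mul_assoc, inv_mul_cancel₀ (ne_of_gt h1ε), one_mul] at h5
      exact h5
    linarith
  -- UPPER BOUND
  have hupp : ∀ᶠ t in nhdsWithin t₀ J, F t < F t₀ + ε' := by
    obtain ⟨C, hC0, hC⟩ := hCex t₀ ht₀
    set η := ε'/20 with hηdef
    have hη : 0 < η := by positivity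
    have hF0' := hF0 t₀ ht₀
    set ε := ε'/(2*(F t₀ + ε' + 1)) with hεdef
    have hεpos : 0 < ε := by
      apply div_pos hε'
      nlinarith
    have h1ε : (0:ℝ) < 1 + ε := by linarith
    obtain ⟨δ, hδ, hδb⟩ := hbilip t₀ ht₀ ε hεpos
    -- finite cover by η-balls
    obtain ⟨s, hscov⟩ := isCompact_univ.elim_finite_subcover
      (fun x : M => {y | d t₀ x y < η}) (fun x => hball t₀ ht₀ x η)
      (by intro x _; exact Set.mem_iUnion.2 ⟨x, by simp [hself t₀ ht₀ x, hη]⟩)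
    have hs : s.Nonempty := by
      rcases Set.mem_iUnion₂.1 (hscov (Set.mem_univ x₀)) with ⟨i, hi, -⟩
      exact ⟨i, hi⟩
    have hsa : s.attach.Nonempty := Finset.attach_nonempty_iff.2 hs
    set N : ℤ := ⌈C/η⌉ with hN
    have hCη : C/η ≤ (N:ℝ) := Int.le_ceil _
    classical
    set T : Finset (↥s → ℤ) := Fintype.piFinset (fun _ => Finset.Icc (-N-1) N) with hT
    set g : (↥s → ℤ) → M → ℝ :=
      fun k x => s.attach.inf' hsa (fun i => η * k i + d t₀ x i.1) with hg
    have glip : ∀ k, ∀ x y : M, |g k x - g k y| ≤ d t₀ x y := by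
      intro k x y
      rw [abs_sub_le_iff]
      constructor
      · rw [sub_le_iff_le_add]
        have : g k x - d t₀ x y ≤ g k y := by
          apply Finset.le_inf'
          intro j _
          have h6 : g k x ≤ η * k j + d t₀ x j.1 := Finset.inf'_le _ (Finset.mem_attach _ j)
          have h7 := htri t₀ ht₀ x y j.1
          linarith
        linarith
      · rw [sub_le_iff_le_add]
        have : g k y - d t₀ y x ≤ g k x := by
          apply Finset.le_inf'
          intro j _
          have h6 : g k y ≤ η * k j + d t₀ y j.1 := Finset.inf'_le _ (Finset.mem_attach _ j)
          have h7 := htri t₀ ht₀ y x j.1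
          linarith
        have h8 := hsymm t₀ ht₀ y x
        linarith
    have gcont : ∀ k, Continuous (g k) := fun k => hcont t₀ ht₀ _ (glip k)
    have gle : ∀ k, (∫ x, g k x ∂(μ t₀)) - ∫ x, g k x ∂(ν t₀) ≤ F t₀ :=
      fun k => hFle t₀ ht₀ (g k) (glip k)
    have hev3 : ∀ᶠ t in nhdsWithin t₀ J, ∀ k ∈ T,
        (∫ x, g k x ∂(μ t)) - ∫ x, g k x ∂(ν t) < F t₀ + η := by
      rw [eventually_all_finset]
      intro k _
      exact (hIt (g k) (gcont k)).eventually
        (gt_mem_nhds (lt_of_le_of_lt (gle k) (by linarith)))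
    have hev2 : ∀ᶠ t in nhdsWithin t₀ J, |t - t₀| < δ := by
      apply eventually_nhdsWithin_of_eventually_nhds
      filter_upwards [Metric.ball_mem_nhds t₀ hδ] with t ht
      simpa [Real.dist_eq] using ht
    filter_upwards [hev3, hev2, self_mem_nhdsWithin] with t h3 h2 htJ
    haveI := hμp t htJ
    haveI := hνp t htJ
    have hFt : F t ≤ (1+ε) * (F t₀ + 5*η) := by
      apply hFub t htJ
      intro f hfl
      set f' : M → ℝ := fun x => (1+ε)⁻¹ * (f x - f x₀) with hf'
      have hf'lip : ∀ x y, |f' x - f' y| ≤ d t₀ x y := by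
        intro x y
        have he : f' x - f' y = (1+ε)⁻¹ * (f x - f y) := by rw [hf']; ring
        rw [he, abs_mul, abs_of_pos (inv_pos.2 h1ε)]
        have h4 := (hfl x y).trans (hδb t htJ h2 x y).2
        calc (1+ε)⁻¹ * |f x - f y| ≤ (1+ε)⁻¹ * ((1+ε) * d t₀ x y) :=
              mul_le_mul_of_nonneg_left h4 (le_of_lt (inv_pos.2 h1ε))
        _ = d t₀ x y := by
              rw [← mul_assoc, inv_mul_cancel₀ (ne_of_gt h1ε), one_mul]
      have hf'0 : f' x₀ = 0 := by simp [hf']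
      have hf'b : ∀ x, |f' x| ≤ C := by
        intro x
        have := hf'lip x x₀
        rw [hf'0, sub_zero] at this
        exact this.trans (hC x)
      have hf'c : Continuous f' := hcont t₀ ht₀ f' hf'lip
      set k : ↥s → ℤ := fun i => ⌊f' i.1 / η⌋ with hk
      have hkT : k ∈ T := by
        rw [hT, Fintype.mem_piFinset]
        intro i
        rw [Finset.mem_Icc]
        simp only [hk]
        have hb := abs_le.1 (hf'b i.1)
        constructor
        · have hlo : (-(N:ℝ)) ≤ f' i.1 / η := by
            have ha1 : (-C)/η ≤ f' i.1 / η := (div_le_div_iff_of_pos_right hη).2 hb.1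
            have ha2 : (-C)/η = -(C/η) := by ring
            linarith [hCη]
          have : (-N : ℤ) ≤ ⌊f' i.1 / η⌋ := Int.le_floor.2 (by push_cast; exact hlo)
          omega
        · have hhi : f' i.1 / η ≤ C/η := (div_le_div_iff_of_pos_right hη).2 hb.2
          have : (⌊f' i.1 / η⌋ : ℝ) ≤ (N:ℝ) := (Int.floor_le _).trans (hhi.trans hCη)
          exact_mod_cast this
      have happx : ∀ x, |g k x - f' x| ≤ 2*η := by
        intro x
        obtain ⟨i, his, hix⟩ : ∃ i ∈ s, d t₀ i x < η := by
          rcases Set.mem_iUnion₂.1 (hscov (Set.mem_univ x)) with ⟨i, hi, hx⟩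
          exact ⟨i, hi, hx⟩
        rw [abs_sub_le_iff]
        constructor
        · have h6 : g k x ≤ η * k ⟨i, his⟩ + d t₀ x i :=
            Finset.inf'_le _ (Finset.mem_attach _ ⟨i, his⟩)
          have h7 : η * (k ⟨i, his⟩ : ℝ) ≤ f' i := by
            rw [hk]
            dsimp only
            have h7a := Int.floor_le (f' i / η)
            have h7b := mul_le_mul_of_nonneg_left h7a hη.le
            calc η * (⌊f' i / η⌋:ℝ) ≤ η * (f' i / η) := h7b
            _ = f' i := by field_simp
          have h8 := (abs_le.1 (hf'lip i x)).2
          have h9 := hsymm t₀ ht₀ x i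
          linarith
        · have h10 : f' x - η ≤ g k x := by
            apply Finset.le_inf'
            intro j _
            have h11 : f' j.1 - η ≤ η * (k j:ℝ) := by
              rw [hk]
              dsimp only
              have h11a := le_of_lt (Int.sub_one_lt_floor (f' j.1 / η))
              have h11b := mul_le_mul_of_nonneg_left h11a hη.le
              calc f' j.1 - η = η * (f' j.1 / η - 1) := by field_simp
              _ ≤ η * (⌊f' j.1 / η⌋:ℝ) := h11b
            have h12 := (abs_le.1 (hf'lip x j.1)).2
            linarith
          linarith
      -- integral comparison
      have hdiffb : |(∫ x, (f' x - g k x) ∂(μ t)) - ∫ x, (f' x - g k x) ∂(ν t)| ≤ 2*(2*η) := by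
        apply habs t htJ _ (hf'c.sub (gcont k)) (2*η)
        intro x
        rw [Pi.sub_apply, abs_sub_comm]
        exact happx x
      have hsub : (∫ x, (f' x - g k x) ∂(μ t)) - ∫ x, (f' x - g k x) ∂(ν t)
          = ((∫ x, f' x ∂(μ t)) - ∫ x, g k x ∂(μ t))
            - ((∫ x, f' x ∂(ν t)) - ∫ x, g k x ∂(ν t)) := by
        rw [integral_sub (hInt f' hf'c _ inferInstance) (hInt _ (gcont k) _ inferInstance),
            integral_sub (hInt f' hf'c _ inferInstance) (hInt _ (gcont k) _ inferInstance)]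
      have h5 := h3 k hkT
      have h13 : (∫ x, f' x ∂(μ t)) - ∫ x, f' x ∂(ν t) ≤ F t₀ + 5*η := by
        rw [hsub] at hdiffb
        have := (abs_le.1 hdiffb).2
        linarith
      -- rewrite c in terms of f'
      have hfc : Continuous f := hcont t htJ f hfl
      have e1 := hshift t htJ f hfc (f x₀)
      have e2 : ∀ x, f x - f x₀ = (1+ε) * f' x := by
        intro x
        rw [hf']
        dsimp only
        rw [← mul_assoc, mul_inv_cancel₀ (ne_of_gt h1ε), one_mul]
      have hceq : (∫ x, f x ∂(μ t)) - ∫ x, f x ∂(ν t)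
          = (1+ε) * ((∫ x, f' x ∂(μ t)) - ∫ x, f' x ∂(ν t)) := by
        rw [← e1]
        simp_rw [e2]
        rw [integral_const_mul (1+ε) f', integral_const_mul (1+ε) f', mul_sub]
      rw [hceq]
      have h14 : 0 ≤ (1+ε) := le_of_lt h1ε
      nlinarith [h13, h14]
    have hεe : ε * (2*(F t₀ + ε' + 1)) = ε' := by
      rw [hεdef]; field_simp
    have h5η : 5*η = ε'/4 := by rw [hηdef]; ring
    nlinarith [mul_pos hεpos hε', hεpos]
  filter_upwards [hlow, hupp] with t ha hb
  rw [Real.dist_eq, abs_sub_lt_iff]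
  constructor <;> linarith
end

section
/- Let 0 < ε ≤ 1/4 and let F : [−1, −4ε] → ℝ be continuous on [−1, −4ε] and differentiable on (−1, −4ε), with F(−1) ≤ 1/2 + ε and F′(t) ≤ F(t)(2F(t) − 1)/(−t) for all t ∈ (−1, −4ε). Then F(t) ≤ 1/2 + 2ε/(−t) for every t ∈ [−1, −4ε]. -/
open Set Filter Topology

/-- Frequency-comparison ODE lemma: if `0 < ε ≤ 1/4` and `F` is continuous on `[−1, −4ε]`,
differentiable on `(−1, −4ε)` with `F′(t) ≤ F(t)(2F(t) − 1)/(−t)` there, and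
`F(−1) ≤ 1/2 + ε`, then `F(t) ≤ 1/2 + 2ε/(−t)` on `[−1, −4ε]`. -/
theorem stmt14 (ε : ℝ) (hε : 0 < ε) (hε' : ε ≤ 1 / 4)
    (F F' : ℝ → ℝ)
    (hcont : ContinuousOn F (Set.Icc (-1) (-(4 * ε))))
    (hderiv : ∀ t ∈ Set.Ioo (-1 : ℝ) (-(4 * ε)), HasDerivAt F (F' t) t)
    (hF1 : F (-1) ≤ 1 / 2 + ε)
    (hode : ∀ t ∈ Set.Ioo (-1 : ℝ) (-(4 * ε)), F' t ≤ F t * (2 * F t - 1) / (-t)) :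
    ∀ t ∈ Set.Icc (-1 : ℝ) (-(4 * ε)), F t ≤ 1 / 2 + 2 * ε / (-t) := by
  have hb_neg : -(4*ε) < 0 := by linarith
  set g : ℝ → ℝ := fun s => 1/ε + 1/2 + 2*s⁻¹ - s with hg_def
  set B : ℝ → ℝ := fun s => (g s)⁻¹ with hB_def
  set φ : ℝ → ℝ := fun s => (-s) * (F s - 1/2) with hφ_def
  -- lower bound on g
  have hg_ge : ∀ s ∈ Icc (-1:ℝ) (-(4*ε)), 1/(2*ε) ≤ g s := by
    intro s hs
    have hs0 : s < 0 := lt_of_le_of_lt hs.2 hb_neg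
    have h1 : s ≤ -(4*ε) := hs.2
    have hsinv : s * s⁻¹ = 1 := mul_inv_cancel₀ (ne_of_lt hs0)
    have hinvneg : s⁻¹ < 0 := inv_lt_zero.mpr hs0
    have h2e : 2*ε*(1/(2*ε)) = 1 := by field_simp
    have key : -(1/(2*ε)) ≤ 2*s⁻¹ := by
      nlinarith [hsinv, h2e, h1, hs0, hε, mul_pos (neg_pos.mpr hs0) hε]
    have hhalf : 1/ε - 1/(2*ε) = 1/(2*ε) := by field_simp; ring
    simp only [hg_def]
    linarith [key, h1, hε, hhalf]
  have hg_pos : ∀ s ∈ Icc (-1:ℝ) (-(4*ε)), 0 < g s :=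
    fun s hs => lt_of_lt_of_le (by positivity) (hg_ge s hs)
  have hB_le : ∀ s ∈ Icc (-1:ℝ) (-(4*ε)), B s ≤ 2*ε := by
    intro s hs
    have h1 := hg_ge s hs
    have h2 := hg_pos s hs
    have : (g s)⁻¹ ≤ (1/(2*ε))⁻¹ := by
      apply inv_anti₀ (by positivity) h1
    simpa [one_div] using this
  have hBderiv : ∀ s ∈ Icc (-1:ℝ) (-(4*ε)),
      HasDerivAt B ((2*(s^2)⁻¹ + 1) * ((g s)⁻¹)^2) s := by
    intro s hs
    have hs0 : s ≠ 0 := ne_of_lt (lt_of_le_of_lt hs.2 hb_neg)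
    have hgs : g s ≠ 0 := ne_of_gt (hg_pos s hs)
    have hg' : HasDerivAt g (2 * (-(s^2)⁻¹) - 1) s := by
      have h1 : HasDerivAt (fun x : ℝ => x⁻¹) (-(s^2)⁻¹) s := hasDerivAt_inv hs0
      have h2 : HasDerivAt (fun x : ℝ => 1/ε + 1/2 + 2*x⁻¹ - x) (2 * (-(s^2)⁻¹) - 1) s := by
        have h3 := ((h1.const_mul 2).const_add (1/ε + 1/2)).sub (hasDerivAt_id' s)
        exact h3
      exact h2
    have h := hg'.inv hgs
    refine h.congr_deriv ?_
    ring
  have hφderiv : ∀ s ∈ Ioo (-1:ℝ) (-(4*ε)),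
      HasDerivAt φ (-(F s - 1/2) + (-s)*F' s) s := by
    intro s hs
    have h1 : HasDerivAt (fun x : ℝ => -x) (-1) s := (hasDerivAt_id s).neg
    have h2 : HasDerivAt (fun x => F x - 1/2) (F' s) s := (hderiv s hs).sub_const _
    have h := h1.mul h2
    refine h.congr_deriv ?_
    ring
  have hcontφ : ContinuousOn φ (Icc (-1:ℝ) (-(4*ε))) :=
    (continuousOn_id.neg).mul (hcont.sub continuousOn_const)
  have hcontB : ContinuousOn B (Icc (-1:ℝ) (-(4*ε))) :=
    fun s hs => ((hBderiv s hs).continuousAt).continuousWithinAt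
  intro t ht
  rcases eq_or_lt_of_le ht.1 with h1t | h1t
  · rw [← h1t]
    norm_num
    linarith
  · have htneg : t < 0 := lt_of_le_of_lt ht.2 hb_neg
    suffices hφt : φ t ≤ 2*ε by
      have hφt' : (-t) * (F t - 1/2) ≤ 2*ε := hφt
      have h2 : F t - 1/2 ≤ 2*ε/(-t) := by
        rw [le_div_iff₀ (by linarith : (0:ℝ) < -t)]
        linarith [hφt']
      linarith
    -- φ(-1) < B(-1)
    have hφa : φ (-1) < B (-1) := by
      have hB1 : B (-1) = (1/ε - 1/2)⁻¹ := by
        simp only [hB_def, hg_def]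
        norm_num
        ring
      have hφ1 : φ (-1) = F (-1) - 1/2 := by simp [hφ_def]
      have hd : (0:ℝ) < 1/ε - 1/2 := by
        have : (1:ℝ)/ε ≥ 4 := by
          rw [ge_iff_le, le_div_iff₀ hε]; linarith
        linarith
      have hdu : (1/ε - 1/2) * (1/ε - 1/2)⁻¹ = 1 := mul_inv_cancel₀ (ne_of_gt hd)
      have he1 : ε * (1/ε) = 1 := by field_simp
      have hu : 0 < (1/ε - 1/2)⁻¹ := inv_pos.2 hd
      have : ε < (1/ε - 1/2)⁻¹ := by nlinarith [hdu, he1, hu, hε, mul_pos hε hu]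
      rw [hB1, hφ1]
      linarith
    -- find a' close to -1
    have hmem1 : (-1:ℝ) ∈ Icc (-1:ℝ) (-(4*ε)) := ⟨le_refl _, by linarith⟩
    obtain ⟨a', hφa', ha'⟩ : ∃ a', φ a' < B a' ∧ a' ∈ Ioo (-1:ℝ) t := by
      have htend := (hcontφ.sub hcontB) (-1) hmem1
      have hev : ∀ᶠ s in 𝓝[Icc (-1:ℝ) (-(4*ε))] (-1), φ s - B s < 0 :=
        htend.eventually_lt_const (by linarith : φ (-1) - B (-1) < 0)
      have hIoo_mem : Ioo (-1:ℝ) t ∈ 𝓝[>] (-1:ℝ) :=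
        Ioo_mem_nhdsGT_of_mem ⟨le_rfl, h1t⟩
      have hIcc_mem : Icc (-1:ℝ) (-(4*ε)) ∈ 𝓝[>] (-1:ℝ) :=
        mem_of_superset hIoo_mem (fun x hx => ⟨le_of_lt hx.1, le_trans (le_of_lt hx.2) ht.2⟩)
      have hev' : ∀ᶠ s in 𝓝[>] (-1:ℝ), φ s - B s < 0 :=
        hev.filter_mono (nhdsWithin_le_iff.mpr hIcc_mem)
      have hev2 : ∀ᶠ s in 𝓝[>] (-1:ℝ), s ∈ Ioo (-1:ℝ) t :=
        eventually_of_mem hIoo_mem (fun x hx => hx)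
      obtain ⟨a', h1, h2⟩ := (hev'.and hev2).exists
      exact ⟨a', by linarith, h2⟩
    have hsub : Icc a' t ⊆ Icc (-1:ℝ) (-(4*ε)) :=
      Icc_subset_Icc (le_of_lt ha'.1) ht.2
    have hsub' : Ico a' t ⊆ Ioo (-1:ℝ) (-(4*ε)) :=
      fun x hx => ⟨lt_of_lt_of_le ha'.1 hx.1, lt_of_lt_of_le hx.2 ht.2⟩
    have key : ∀ ⦃x⦄, x ∈ Icc a' t → φ x ≤ B x := by
      apply image_le_of_deriv_right_lt_deriv_boundary' (f' := fun x => -(F x - 1/2) + (-x)*F' x)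
        (B' := fun x => (2*(x^2)⁻¹ + 1) * ((g x)⁻¹)^2)
        (hcontφ.mono hsub)
        (fun x hx => (hφderiv x (hsub' hx)).hasDerivWithinAt)
        (le_of_lt hφa')
        (hcontB.mono hsub)
        (fun x hx => (hBderiv x (hsub (Ico_subset_Icc_self hx))).hasDerivWithinAt)
      intro x hx hfb
      have hxIoo := hsub' hx
      have hx0 : x < 0 := lt_trans hxIoo.2 hb_neg
      have hFx := hode x hxIoo
      have hxpos : (0:ℝ) < -x := by linarith
      have h1 : (-x) * F' x ≤ F x * (2*F x - 1) := by
        have h := mul_le_mul_of_nonneg_left hFx (le_of_lt hxpos)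
        rwa [mul_div_cancel₀ _ (ne_of_gt hxpos)] at h
      have hBpos : 0 < (-x) * (F x - 1/2) := by
        have : φ x = B x := hfb
        simp only [hφ_def, hB_def] at this
        rw [this]
        exact inv_pos.2 (hg_pos x (hsub (Ico_subset_Icc_self hx)))
      have hφx : (-x) * (F x - 1/2) = (g x)⁻¹ := hfb
      have hx2 : (0:ℝ) < x^2 := by nlinarith [mul_pos hxpos hxpos]
      have hx2inv : x^2 * (x^2)⁻¹ = 1 := mul_inv_cancel₀ (ne_of_gt hx2)
      show -(F x - 1/2) + (-x)*F' x < (2*(x^2)⁻¹ + 1) * ((g x)⁻¹)^2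
      rw [← hφx]
      nlinarith [h1, hBpos, hx2, hx2inv, mul_pos hBpos hBpos]
    have hφt := key ⟨le_of_lt ha'.2, le_refl t⟩
    exact le_trans hφt (hB_le t ht)
end
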